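/- arXiv:2110.04154 — 6 statements merged into one kernel-verified Lean document; each statement's English description precedes it below -/
import Mathlib

section
/- Let G be a graph and T a determining set for G such that the induced subgraph G[T] is asymmetric (has trivial automorphism group). Then G is 2-distinguishable, and the coloring assigning one color to T and another to V(G)\T is a 2-distinguishing coloring. -/
/-- `S` is a determining set for `G`: the only automorphism fixing `S` pointwise
is the identity. -/
def IsDeterminingSet {V : Type*} (G : SimpleGraph V) (S : Set V) : Prop :=
  ∀ φ : G ≃g G, (∀ v ∈ S, φ v = v) → ∀ v, φ v = v

/-- The determining number: minimum size of a determining set. -/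
noncomputable def detNum {V : Type*} (G : SimpleGraph V) : ℕ :=
  sInf {r | ∃ S : Set V, S.ncard = r ∧ IsDeterminingSet G S}

/-- A coloring is distinguishing if the only automorphism preserving all color
classes is the identity. -/
def IsDistinguishing {V : Type*} (G : SimpleGraph V) {d : ℕ} (c : V → Fin d) : Prop :=
  ∀ φ : G ≃g G, (∀ v, c (φ v) = c v) → ∀ v, φ v = v

/-- The distinguishing number: least `d` admitting a distinguishing `d`-coloring. -/
noncomputable def distNum {V : Type*} (G : SimpleGraph V) : ℕ :=
  sInf {d | ∃ c : V → Fin d, IsDistinguishing G c}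

/-- `S` is a color class of a 2-distinguishing coloring: every automorphism
preserving `S` setwise is the identity. -/
def IsDistClass {V : Type*} (G : SimpleGraph V) (S : Set V) : Prop :=
  ∀ φ : G ≃g G, (∀ v, φ v ∈ S ↔ v ∈ S) → ∀ v, φ v = v

/-- The cost of 2-distinguishing: minimum size of a color class over all
2-distinguishing colorings. -/
noncomputable def costNum {V : Type*} (G : SimpleGraph V) : ℕ :=
  sInf {m | ∃ S : Set V, S.ncard = m ∧ IsDistClass G S}

/-- If `T` is a determining set for `G` and the induced subgraph `G[T]` is
asymmetric, then `G` is 2-distinguishable and the coloring with classes `T` and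
its complement is 2-distinguishing. -/
theorem stmt0 {V : Type*} (G : SimpleGraph V) (T : Set V)
    (hdet : IsDeterminingSet G T)
    (hasym : ∀ φ : (G.induce T) ≃g (G.induce T), ∀ v, φ v = v) :
    IsDistClass G T ∧ ∃ c : V → Fin 2, IsDistinguishing G c := by
  have hclass : IsDistClass G T := by
    intro φ hφ
    apply hdet
    intro v hv
    let ψ : (G.induce T) ≃g (G.induce T) :=
      { toFun := fun x => ⟨φ x, (hφ x).mpr x.2⟩
        invFun := fun x => ⟨φ.symm x, by
          have := hφ (φ.symm x)
          rw [φ.apply_symm_apply] at this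
          exact this.mp x.2⟩
        left_inv := fun x => by simp
        right_inv := fun x => by simp
        map_rel_iff' := by
          intro a b
          simp [SimpleGraph.comap]
          exact φ.map_rel_iff
      }
    have := hasym ψ ⟨v, hv⟩
    exact congrArg Subtype.val this
  classical
  refine ⟨hclass, ⟨fun v => if v ∈ T then 0 else 1, ?_⟩⟩
  intro φ hφ
  apply hclass φ
  intro v
  have := hφ v
  by_cases h : v ∈ T <;> by_cases h' : φ v ∈ T <;> simp [h, h'] at this ⊢
end

section
/- For n > 3, the set S = {U_0, U_1, ..., U_{n-1}}, where U_i has 1's in the first i positions and 0's elsewhere, is a determining set for Q_n^2; hence det(Q_n^2) ≤ n. -/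
/-- The square `Q_n^2` of the hypercube: binary `n`-vectors, adjacent iff their
Hamming distance is 1 or 2. -/
def Qsq (n : ℕ) : SimpleGraph (Fin n → ZMod 2) :=
  SimpleGraph.fromRel (fun x y => hammingDist x y ≤ 2)

/-- `U n i` is the binary vector with 1's in positions `1, …, i` and 0's elsewhere. -/
def U (n i : ℕ) : Fin n → ZMod 2 := fun j => if (j : ℕ) < i then 1 else 0

lemma zmod2_cases (a : ZMod 2) : a = 0 ∨ a = 1 := by revert a; decide

lemma zmod2_add_one_ne (a : ZMod 2) : a + 1 ≠ a := by revert a; decide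

lemma qsq_adj {n : ℕ} {x y : Fin n → ZMod 2} :
    (Qsq n).Adj x y ↔ x ≠ y ∧ hammingDist x y ≤ 2 := by
  rw [Qsq, SimpleGraph.fromRel_adj]
  constructor
  · rintro ⟨h1, h2 | h2⟩
    · exact ⟨h1, h2⟩
    · exact ⟨h1, (hammingDist_comm x y) ▸ h2⟩
  · rintro ⟨h1, h2⟩; exact ⟨h1, Or.inl h2⟩

open Finset in
def bcount {n : ℕ} (v : Fin n → ZMod 2) (i : ℕ) : ℕ :=
  (Finset.univ.filter fun j : Fin n => (j : ℕ) < i ∧ v j = 1).card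

open Finset in
lemma L0 {n i : ℕ} (h : i ≤ n) :
    ∑ j : Fin n, (if (j : ℕ) < i then 1 else 0) = i := by
  rw [Fin.sum_univ_eq_sum_range (fun k => if k < i then (1:ℕ) else 0)]
  rw [← Finset.card_filter]
  have : (Finset.range n).filter (fun k => k < i) = Finset.range i := by
    ext k; simp; omega
  simp [this]

open Finset in
lemma L1 {n : ℕ} (v : Fin n → ZMod 2) {i : ℕ} (h : i ≤ n) :
    hammingDist v (U n i) + 2 * bcount v i = bcount v n + i := by
  unfold hammingDist bcount
  rw [Finset.card_filter, Finset.card_filter, Finset.card_filter]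
  conv_rhs => rw [← L0 h]
  rw [ Finset.mul_sum, ← Finset.sum_add_distrib, ← Finset.sum_add_distrib]
  apply Finset.sum_congr rfl
  intro j _
  rcases zmod2_cases (v j) with hv | hv <;> by_cases hj : (j : ℕ) < i <;>
    simp [U, hv, hj, j.isLt]

open Finset in
lemma L2 {n : ℕ} (v : Fin n → ZMod 2) {j : ℕ} (hj : j < n) :
    bcount v (j + 1) = bcount v j + (if v ⟨j, hj⟩ = 1 then 1 else 0) := by
  unfold bcount
  rw [Finset.card_filter, Finset.card_filter]
  have : (if v ⟨j, hj⟩ = 1 then (1:ℕ) else 0)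
      = ∑ j' : Fin n, if j' = ⟨j, hj⟩ then (if v j' = 1 then 1 else 0) else 0 := by
    rw [Finset.sum_ite_eq' Finset.univ ⟨j, hj⟩ (fun j' => if v j' = 1 then (1:ℕ) else 0)]
    simp
  rw [this, ← Finset.sum_add_distrib]
  apply Finset.sum_congr rfl
  intro j' _
  by_cases h3 : j' = (⟨j, hj⟩ : Fin n)
  · subst h3
    simp
  · have h4 : (j' : ℕ) ≠ j := fun h => h3 (Fin.ext h)
    have h5 : ((j' : ℕ) < j + 1) ↔ ((j' : ℕ) < j) := by omega
    simp [h3, h5]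

lemma qsq_exists_walk {n : ℕ} : ∀ (k : ℕ) (x y : Fin n → ZMod 2),
    hammingDist x y ≤ 2 * k → ∃ p : (Qsq n).Walk x y, p.length ≤ k := by
  intro k
  induction k with
  | zero =>
    intro x y h
    have : x = y := hammingDist_eq_zero.mp (by omega)
    subst this
    exact ⟨SimpleGraph.Walk.nil, le_refl 0⟩
  | succ k ih =>
    intro x y h
    by_cases hxy : x = y
    · subst hxy; exact ⟨SimpleGraph.Walk.nil, by simp⟩
    by_cases h2 : hammingDist x y ≤ 2
    · exact ⟨SimpleGraph.Walk.cons (qsq_adj.mpr ⟨hxy, h2⟩) SimpleGraph.Walk.nil, by simp⟩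
    · have hc : 1 < (Finset.univ.filter fun j : Fin n => x j ≠ y j).card := by
        unfold hammingDist at h2; omega
      obtain ⟨j1, hj1, j2, hj2, hne⟩ := Finset.one_lt_card.mp hc
      simp only [Finset.mem_filter] at hj1 hj2
      set z := Function.update (Function.update x j1 (y j1)) j2 (y j2) with hz
      have hsub : (Finset.univ.filter fun j : Fin n => z j ≠ y j)
          ⊆ (Finset.univ.filter fun j : Fin n => x j ≠ y j) \ {j1, j2} := by
        intro j hj
        simp only [Finset.mem_filter, Finset.mem_sdiff, Finset.mem_insert,
          Finset.mem_singleton, Finset.mem_univ, true_and] at hj ⊢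
        have hzj : z j = if j = j2 then y j2 else if j = j1 then y j1 else x j := by
          rw [hz, Function.update_apply, Function.update_apply]
        have e2 : j ≠ j2 := by intro e; subst e; exact hj (by simp [hzj])
        have e1 : j ≠ j1 := by intro e; subst e; exact hj (by simp [hzj, e2])
        refine ⟨by simpa [hzj, e1, e2] using hj, by tauto⟩
      have hzy : hammingDist z y ≤ 2 * k := by
        have h12 : ({j1, j2} : Finset (Fin n)) ⊆
            (Finset.univ.filter fun j : Fin n => x j ≠ y j) := by
          intro j hj
          simp only [Finset.mem_insert, Finset.mem_singleton] at hj
          rcases hj with rfl | rfl <;> simp [hj1.2, hj2.2]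
        have hcard := Finset.card_le_card hsub
        rw [Finset.card_sdiff_of_subset h12] at hcard
        have : ({j1, j2} : Finset (Fin n)).card = 2 := by
          rw [Finset.card_insert_of_notMem (by simp [hne]), Finset.card_singleton]
        unfold hammingDist at h2 h ⊢
        omega
      have hxz : (Qsq n).Adj x z := by
        rw [qsq_adj]
        constructor
        · intro e
          apply hj1.2
          have := congrFun e j1
          rwa [hz, Function.update_of_ne hne, Function.update_self] at this
        · have : (Finset.univ.filter fun j : Fin n => x j ≠ z j) ⊆ {j1, j2} := by
            intro j hj
            simp only [Finset.mem_filter, Finset.mem_insert, Finset.mem_singleton] at hj ⊢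
            by_contra hcon
            push_neg at hcon
            apply hj.2
            rw [hz, Function.update_of_ne hcon.2, Function.update_of_ne hcon.1]
          calc hammingDist x z ≤ ({j1, j2} : Finset (Fin n)).card := Finset.card_le_card this
            _ ≤ 2 := Finset.card_insert_le _ _ |>.trans (by simp)
      obtain ⟨p, hp⟩ := ih z y hzy
      exact ⟨SimpleGraph.Walk.cons hxz p, by simpa using Nat.succ_le_succ hp⟩

lemma qsq_walk_le {n : ℕ} {x y : Fin n → ZMod 2} (p : (Qsq n).Walk x y) :
    hammingDist x y ≤ 2 * p.length := by
  induction p with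
  | nil => simp
  | @cons u v w h q ih =>
    have h2 : hammingDist u v ≤ 2 := (qsq_adj.mp h).2
    calc hammingDist u w ≤ hammingDist u v + hammingDist v w := hammingDist_triangle _ _ _
      _ ≤ 2 + 2 * q.length := by omega
      _ = 2 * (SimpleGraph.Walk.cons h q).length := by simp; ring

lemma qsq_dist {n : ℕ} (x y : Fin n → ZMod 2) :
    (Qsq n).dist x y = (hammingDist x y + 1) / 2 := by
  obtain ⟨p, hp⟩ := qsq_exists_walk ((hammingDist x y + 1) / 2) x y (by omega)
  have hle : (Qsq n).dist x y ≤ (hammingDist x y + 1) / 2 :=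
    le_trans (SimpleGraph.dist_le p) hp
  have hreach : (Qsq n).Reachable x y := ⟨p⟩
  obtain ⟨q, hq⟩ := hreach.exists_walk_length_eq_dist
  have := qsq_walk_le q
  omega

lemma qsq_iso_dist {n : ℕ} (φ : Qsq n ≃g Qsq n) (x y : Fin n → ZMod 2) :
    (Qsq n).dist (φ x) (φ y) = (Qsq n).dist x y := by
  have key : ∀ (ψ : Qsq n ≃g Qsq n) (a b : Fin n → ZMod 2),
      (Qsq n).dist (ψ a) (ψ b) ≤ (Qsq n).dist a b := by
    intro ψ a b
    obtain ⟨p, hp⟩ := qsq_exists_walk ((hammingDist a b + 1) / 2) a b (by omega)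
    have hreach : (Qsq n).Reachable a b := ⟨p⟩
    obtain ⟨q, hq⟩ := hreach.exists_walk_length_eq_dist
    have := SimpleGraph.dist_le (q.map ψ.toEmbedding.toHom)
    rwa [SimpleGraph.Walk.length_map, hq] at this
  refine le_antisymm (key φ x y) ?_
  have := key φ.symm (φ x) (φ y)
  simpa using this

lemma qsq_ite_le_one {p : Prop} [Decidable p] : (if p then (1:ℕ) else 0) ≤ 1 := by
  split_ifs <;> omega

lemma bcount_zero {n : ℕ} (v : Fin n → ZMod 2) : bcount v 0 = 0 := by
  simp [bcount]

lemma zmod2_eq_of_ite {a b : ZMod 2}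
    (h : (if a = 1 then (1:ℕ) else 0) = (if b = 1 then 1 else 0)) : a = b := by
  rcases zmod2_cases a with ha | ha <;> rcases zmod2_cases b with hb | hb <;>
    simp [ha, hb] at h ⊢

lemma zmod2_succ_of_ite {a b : ZMod 2}
    (h : (if a = 1 then (1:ℕ) else 0) + (if b = 1 then 1 else 0) = 1) : b = a + 1 := by
  rcases zmod2_cases a with ha | ha <;> rcases zmod2_cases b with hb | hb <;>
    simp [ha, hb] at h ⊢ <;> decide

set_option maxHeartbeats 2000000 in
lemma stepB {n : ℕ} (hn : 3 < n) (v w : Fin n → ZMod 2)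
    (H : ∀ i, i < n → (hammingDist v (U n i) + 1) / 2 = (hammingDist w (U n i) + 1) / 2) :
    v = w ∨ ((∀ j : Fin n, (j : ℕ) < n - 1 → w j = v j + 1) ∧
      v ⟨1, by omega⟩ = v ⟨0, by omega⟩ + 1) := by
  have hb0v := bcount_zero v
  have hb0w := bcount_zero w
  have h0v := L1 v (Nat.zero_le n)
  have h0w := L1 w (Nat.zero_le n)
  have H0 := H 0 (by omega)
  by_cases hp : bcount v n % 2 = bcount w n % 2
  · left
    funext j
    have hj : (j : ℕ) < n := j.isLt
    have hjv := L1 v (le_of_lt hj)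
    have hjw := L1 w (le_of_lt hj)
    have Hj := H (j : ℕ) hj
    have l2v := L2 v hj
    have l2w := L2 w hj
    simp only [Fin.eta] at l2v l2w
    have hc1 : (if v j = 1 then (1:ℕ) else 0) ≤ 1 := qsq_ite_le_one
    have hc2 : (if w j = 1 then (1:ℕ) else 0) ≤ 1 := qsq_ite_le_one
    by_cases hj1 : (j : ℕ) + 1 < n
    · have hj1v := L1 v (le_of_lt hj1)
      have hj1w := L1 w (le_of_lt hj1)
      have Hj1 := H ((j : ℕ) + 1) hj1
      exact zmod2_eq_of_ite (by omega)
    · have e : (j : ℕ) + 1 = n := by omega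
      rw [e] at l2v l2w
      exact zmod2_eq_of_ite (by omega)
  · right
    constructor
    · intro j hj
      have hjn : (j : ℕ) < n := j.isLt
      have hj1 : (j : ℕ) + 1 < n := by omega
      have hjv := L1 v (le_of_lt hjn)
      have hjw := L1 w (le_of_lt hjn)
      have hj1v := L1 v (le_of_lt hj1)
      have hj1w := L1 w (le_of_lt hj1)
      have Hj := H (j : ℕ) hjn
      have Hj1 := H ((j : ℕ) + 1) hj1
      have l2v := L2 v hjn
      have l2w := L2 w hjn
      simp only [Fin.eta] at l2v l2w
      have hc1 : (if v j = 1 then (1:ℕ) else 0) ≤ 1 := qsq_ite_le_one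
      have hc2 : (if w j = 1 then (1:ℕ) else 0) ≤ 1 := qsq_ite_le_one
      exact zmod2_succ_of_ite (by omega)
    · have h1v := L1 v (show (1:ℕ) ≤ n by omega)
      have h1w := L1 w (show (1:ℕ) ≤ n by omega)
      have h2v := L1 v (show (2:ℕ) ≤ n by omega)
      have h2w := L1 w (show (2:ℕ) ≤ n by omega)
      have H1 := H 1 (by omega)
      have H2 := H 2 (by omega)
      have l2v0 := L2 v (show 0 < n by omega)
      have l2w0 := L2 w (show 0 < n by omega)
      have l2v1 := L2 v (show 1 < n by omega)
      have l2w1 := L2 w (show 1 < n by omega)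
      norm_num at l2v0 l2w0 l2v1 l2w1
      have hc1 : (if v ⟨0, by omega⟩ = 1 then (1:ℕ) else 0) ≤ 1 := qsq_ite_le_one
      have hc2 : (if v ⟨1, by omega⟩ = 1 then (1:ℕ) else 0) ≤ 1 := qsq_ite_le_one
      have hc3 : (if w ⟨0, by omega⟩ = 1 then (1:ℕ) else 0) ≤ 1 := qsq_ite_le_one
      have hc4 : (if w ⟨1, by omega⟩ = 1 then (1:ℕ) else 0) ≤ 1 := qsq_ite_le_one
      exact zmod2_succ_of_ite (by omega)


/-- For `n > 3`, `{U_0, …, U_{n-1}}` is a determining set for `Q_n^2`; hence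
`det(Q_n^2) ≤ n`. -/
theorem stmt4 (n : ℕ) (hn : 3 < n) :
    IsDeterminingSet (Qsq n) {x | ∃ i < n, x = U n i} ∧ detNum (Qsq n) ≤ n := by
  have hdet : IsDeterminingSet (Qsq n) {x | ∃ i < n, x = U n i} := by
    intro φ hfix v
    have hdists : ∀ (x : Fin n → ZMod 2) (i : ℕ), i < n →
        (hammingDist x (U n i) + 1) / 2 = (hammingDist (φ x) (U n i) + 1) / 2 := by
      intro x i hi
      have hU : φ (U n i) = U n i := hfix _ ⟨i, hi, rfl⟩
      have hd := qsq_iso_dist φ x (U n i)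
      rw [hU] at hd
      rw [qsq_dist, qsq_dist] at hd
      exact hd.symm
    rcases stepB hn v (φ v) (hdists v) with h | ⟨ha, hb⟩
    · exact h.symm
    exfalso
    have h0 : (0:ℕ) < n := by omega
    have h1 : (1:ℕ) < n := by omega
    have h2 : (2:ℕ) < n := by omega
    have hn1 : n - 1 < n := by omega
    set i0 : Fin n := ⟨0, h0⟩ with hi0
    set i1 : Fin n := ⟨1, h1⟩ with hi1
    set i2 : Fin n := ⟨2, h2⟩ with hi2
    set iN : Fin n := ⟨n-1, hn1⟩ with hiN
    set w := φ v with hw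
    have hne0N : i0 ≠ iN := by simp [hi0, hiN, Fin.ext_iff]; omega
    have hne1N : i1 ≠ iN := by simp [hi1, hiN, Fin.ext_iff]; omega
    have hne2N : i2 ≠ iN := by simp [hi2, hiN, Fin.ext_iff]; omega
    have hne01 : i0 ≠ i1 := by simp [hi0, hi1, Fin.ext_iff]
    have hne02 : i0 ≠ i2 := by simp [hi0, hi2, Fin.ext_iff]
    have hne12 : i1 ≠ i2 := by simp [hi1, hi2, Fin.ext_iff]
    set u := Function.update (Function.update v i0 (v i0 + 1)) iN
      (if v iN = w iN then v iN + 1 else v iN) with hu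
    have hu0 : u i0 = v i0 + 1 := by
      rw [hu, Function.update_of_ne hne0N, Function.update_self]
    have hu1 : u i1 = v i1 := by
      rw [hu, Function.update_of_ne hne1N, Function.update_of_ne hne01.symm]
    have hu2 : u i2 = v i2 := by
      rw [hu, Function.update_of_ne hne2N, Function.update_of_ne hne02.symm]
    have huN : u iN = if v iN = w iN then v iN + 1 else v iN := by
      rw [hu, Function.update_self]
    have huother : ∀ j : Fin n, j ≠ i0 → j ≠ iN → u j = v j := by
      intro j hj0 hjN
      rw [hu, Function.update_of_ne hjN, Function.update_of_ne hj0]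
    -- u is adjacent to v
    have hadj : (Qsq n).Adj u v := by
      rw [qsq_adj]
      constructor
      · intro e
        exact zmod2_add_one_ne (v i0) (by rw [← hu0, e])
      · have hsub : (Finset.univ.filter fun j : Fin n => u j ≠ v j) ⊆ {i0, iN} := by
          intro j hj
          simp only [Finset.mem_filter, Finset.mem_insert, Finset.mem_singleton] at hj ⊢
          by_contra hcon
          push_neg at hcon
          exact hj.2 (huother j hcon.1 hcon.2)
        calc hammingDist u v ≤ ({i0, iN} : Finset (Fin n)).card := Finset.card_le_card hsub
          _ ≤ 2 := (Finset.card_insert_le _ _).trans (by simp)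
    -- φ fixes u
    have hfixu : φ u = u := by
      rcases stepB hn u (φ u) (hdists u) with h | ⟨_, hb'⟩
      · exact h.symm
      · exfalso
        have e1 : u i1 = u i0 := by
          rw [hu0, hu1, hb]
        have : u ⟨1, by omega⟩ = u ⟨0, by omega⟩ + 1 := hb'
        rw [e1] at this
        exact zmod2_add_one_ne (u i0) this.symm
    -- adjacency transported
    have hadj2 : (Qsq n).Adj u w := by
      have := φ.map_rel_iff.mpr hadj
      rwa [hfixu, ← hw] at this
    -- but hammingDist u w ≥ 3
    have hge : 3 ≤ hammingDist u w := by
      have hsub : ({i1, i2, iN} : Finset (Fin n)) ⊆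
          (Finset.univ.filter fun j : Fin n => u j ≠ w j) := by
        intro j hj
        simp only [Finset.mem_insert, Finset.mem_singleton] at hj
        simp only [Finset.mem_filter, Finset.mem_univ, true_and]
        rcases hj with rfl | rfl | rfl
        · rw [hu1, ha i1 (by simp [hi1]; omega)]
          exact fun e => zmod2_add_one_ne (v i1) e.symm
        · rw [hu2, ha i2 (by simp [hi2]; omega)]
          exact fun e => zmod2_add_one_ne (v i2) e.symm
        · rw [huN]
          by_cases hc : v iN = w iN
          · simp only [hc, if_pos]
            exact fun e => zmod2_add_one_ne (w iN) (by rw [← hc] at e ⊢; exact e)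
          · simp only [hc, if_neg, if_false]
            exact hc
      have hcard : ({i1, i2, iN} : Finset (Fin n)).card = 3 := by
        rw [Finset.card_insert_of_notMem (by simp [hne12, hne1N]),
          Finset.card_insert_of_notMem (by simp [hne2N]), Finset.card_singleton]
      calc (3:ℕ) = ({i1, i2, iN} : Finset (Fin n)).card := hcard.symm
        _ ≤ _ := Finset.card_le_card hsub
    have := (qsq_adj.mp hadj2).2
    omega
  refine ⟨hdet, ?_⟩
  have hSeq : {x | ∃ i < n, x = U n i} = (fun i => U n i) '' (Set.Iio n) := by
    ext x
    simp only [Set.mem_setOf_eq, Set.mem_image, Set.mem_Iio]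
    constructor
    · rintro ⟨i, hi, rfl⟩; exact ⟨i, hi, rfl⟩
    · rintro ⟨i, hi, rfl⟩; exact ⟨i, hi, rfl⟩
  have hcard : ({x | ∃ i < n, x = U n i} : Set (Fin n → ZMod 2)).ncard ≤ n := by
    rw [hSeq]
    have h1 := Set.ncard_image_le (f := fun i => U n i) (Set.finite_Iio n)
    have h2 : (Set.Iio n).ncard = n := by
      have : (Set.Iio n : Set ℕ) = ↑(Finset.range n) := by ext k; simp
      rw [this, Set.ncard_coe_finset, Finset.card_range]
    omega
  calc detNum (Qsq n) ≤ ({x | ∃ i < n, x = U n i} : Set (Fin n → ZMod 2)).ncard :=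
        Nat.sInf_le ⟨_, rfl, hdet⟩
    _ ≤ n := hcard
end

section
/- The determining number of the Hamming graph H(m,n) equals the smallest integer r such that n ≤ S(r,m) + S(r,m−1), where S(r,k) denotes the Stirling number of the second kind. -/
/-- The Hamming graph `H(m,n) = K_m^{□n}`: vertices `[m]^n`, adjacent iff they
differ in exactly one coordinate. -/
def Ham (m n : ℕ) : SimpleGraph (Fin n → Fin m) :=
  SimpleGraph.fromRel (fun x y => hammingDist x y = 1)

/-- Stirling numbers of the second kind. -/
def stirling2 : ℕ → ℕ → ℕ
  | 0, 0 => 1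
  | 0, _ + 1 => 0
  | _ + 1, 0 => 0
  | r + 1, k + 1 => (k + 1) * stirling2 r (k + 1) + stirling2 r k


open Finset Function

namespace Stmt6

variable {m n : ℕ}

abbrev HV (m n : ℕ) := Fin n → Fin m

def dset (x y : HV m n) : Finset (Fin n) := Finset.univ.filter fun i => x i ≠ y i

lemma mem_dset {x y : HV m n} {i : Fin n} : i ∈ dset x y ↔ x i ≠ y i := by
  simp [dset]

lemma hd_def (x y : HV m n) : hammingDist x y = (dset x y).card := rfl

lemma ham_adj {x y : HV m n} : (Ham m n).Adj x y ↔ hammingDist x y = 1 := by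
  rw [Ham, SimpleGraph.fromRel_adj]
  constructor
  · rintro ⟨hne, h | h⟩
    · exact h
    · rwa [hammingDist_comm]
  · intro h
    exact ⟨fun he => by simp [he, hammingDist_self] at h, Or.inl h⟩

noncomputable def dcoord (x y : HV m n) (h : hammingDist x y = 1) : Fin n :=
  (Finset.card_eq_one.mp h).choose

lemma dcoord_spec (x y : HV m n) (h : hammingDist x y = 1) :
    dset x y = {dcoord x y h} :=
  (Finset.card_eq_one.mp h).choose_spec

lemma dcoord_mem_iff {x y : HV m n} (h : hammingDist x y = 1) {i : Fin n} :
    x i ≠ y i ↔ i = dcoord x y h := by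
  rw [← mem_dset, dcoord_spec x y h, Finset.mem_singleton]

lemma dcoord_ne {x y : HV m n} (h : hammingDist x y = 1) :
    x (dcoord x y h) ≠ y (dcoord x y h) := (dcoord_mem_iff h).mpr rfl

lemma eq_of_ne_dcoord {x y : HV m n} (h : hammingDist x y = 1) {i : Fin n}
    (hi : i ≠ dcoord x y h) : x i = y i := by
  by_contra hne
  exact hi ((dcoord_mem_iff h).mp hne)

lemma dcoord_comm {x y : HV m n} (h : hammingDist x y = 1) (h' : hammingDist y x = 1) :
    dcoord y x h' = dcoord x y h := by
  rw [← dcoord_mem_iff h]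
  exact (dcoord_ne h').symm

lemma hd_update (x : HV m n) (j : Fin n) (a : Fin m) (ha : a ≠ x j) :
    hammingDist x (update x j a) = 1 := by
  rw [hd_def, Finset.card_eq_one]
  refine ⟨j, ?_⟩
  ext i
  simp only [mem_dset, Finset.mem_singleton]
  rcases eq_or_ne i j with rfl | hij
  · simp [update_self, Ne.symm ha]
  · simp [update_of_ne hij, hij]

lemma dcoord_update {x : HV m n} {j : Fin n} {a : Fin m} (ha : a ≠ x j)
    (h : hammingDist x (update x j a) = 1) : dcoord x (update x j a) h = j := by
  symm
  rw [← dcoord_mem_iff h]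
  simp [update_self, Ne.symm ha]

lemma eq_update_dcoord {x y : HV m n} (h : hammingDist x y = 1) :
    y = update x (dcoord x y h) (y (dcoord x y h)) := by
  funext i
  rcases eq_or_ne i (dcoord x y h) with rfl | hi
  · simp
  · rw [update_of_ne hi]
    exact (eq_of_ne_dcoord h hi).symm

lemma hd_update_toward {x y : HV m n} {i : Fin n} (hi : x i ≠ y i) :
    hammingDist x (update y i (x i)) + 1 = hammingDist x y := by
  rw [hd_def, hd_def]
  have hds : dset x (update y i (x i)) = (dset x y).erase i := by
    ext j
    rcases eq_or_ne j i with rfl | hj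
    · simp [mem_dset, update_self]
    · simp [mem_dset, update_of_ne hj, hj]
  have hmem : i ∈ dset x y := mem_dset.mpr hi
  rw [hds, Finset.card_erase_of_mem hmem]
  have hpos : 0 < (dset x y).card := Finset.card_pos.mpr ⟨i, hmem⟩
  omega

lemma hd_le_one_of_eq_off {x y : HV m n} (j : Fin n) (hoff : ∀ i, i ≠ j → x i = y i) :
    hammingDist x y ≤ 1 := by
  rw [hd_def]
  calc (dset x y).card ≤ #({j} : Finset (Fin n)) := by
        apply Finset.card_le_card
        intro i hi
        rw [mem_dset] at hi
        simp only [Finset.mem_singleton]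
        by_contra hij
        exact hi (hoff i hij)
    _ = 1 := Finset.card_singleton j

lemma two_le_hd {x y : HV m n} {i j : Fin n} (hij : i ≠ j) (hi : x i ≠ y i) (hj : x j ≠ y j) :
    2 ≤ hammingDist x y := by
  rw [hd_def]
  have hsub : ({i, j} : Finset (Fin n)) ⊆ dset x y := by
    intro k hk
    simp only [Finset.mem_insert, Finset.mem_singleton] at hk
    rcases hk with rfl | rfl <;> [exact mem_dset.mpr hi; exact mem_dset.mpr hj]
  calc 2 = #({i, j} : Finset (Fin n)) := (Finset.card_pair hij).symm
    _ ≤ _ := Finset.card_le_card hsub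

end Stmt6

namespace Stmt6

variable {m n : ℕ}

/-- Triangle: two edges from `a` to mutually close points have the same direction. -/
lemma dcoord_tri {a b c : HV m n} (h1 : hammingDist a b = 1) (h2 : hammingDist a c = 1)
    (hbc : hammingDist b c ≤ 1) : dcoord a b h1 = dcoord a c h2 := by
  by_contra hne
  have hb : b (dcoord a b h1) ≠ c (dcoord a b h1) := by
    rw [← eq_of_ne_dcoord h2 hne]
    exact fun he => dcoord_ne h1 he.symm
  have hc : b (dcoord a c h2) ≠ c (dcoord a c h2) := by
    have hba : b (dcoord a c h2) = a (dcoord a c h2) :=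
      (eq_of_ne_dcoord h1 (Ne.symm hne)).symm
    rw [hba]
    exact dcoord_ne h2
  have := two_le_hd hne hb hc
  omega

/-- Rectangle lemma: in a 4-cycle `a-b-c-d-a` with `a,c` non-adjacent and `b ≠ d`,
opposite edges have the same direction. -/
lemma dcoord_rect {a b c d : HV m n} (hab : hammingDist a b = 1) (hbc : hammingDist b c = 1)
    (had : hammingDist a d = 1) (hdc : hammingDist d c = 1) (hbd : b ≠ d)
    (hac0 : a ≠ c) (hac1 : hammingDist a c ≠ 1) :
    dcoord b c hbc = dcoord a d had := by
  set p := dcoord a b hab with hp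
  set q := dcoord b c hbc with hq
  set p' := dcoord a d had with hp'
  set q' := dcoord d c hdc with hq'
  have hoff : ∀ i, i ≠ p → i ≠ q → a i = c i := by
    intro i hip hiq
    rw [eq_of_ne_dcoord hab hip]
    exact eq_of_ne_dcoord hbc hiq
  have hoff' : ∀ i, i ≠ p' → i ≠ q' → a i = c i := by
    intro i hip hiq
    rw [eq_of_ne_dcoord had hip]
    exact eq_of_ne_dcoord hdc hiq
  have hpq : p ≠ q := by
    intro he
    have hle : hammingDist a c ≤ 1 :=
      hd_le_one_of_eq_off p (fun i hi => hoff i hi (by rw [← he]; exact hi))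
    have h0 : hammingDist a c = 0 := by omega
    exact hac0 (hammingDist_eq_zero.mp h0)
  have hpq' : p' ≠ q' := by
    intro he
    have hle : hammingDist a c ≤ 1 :=
      hd_le_one_of_eq_off p' (fun i hi => hoff' i hi (by rw [← he]; exact hi))
    have h0 : hammingDist a c = 0 := by omega
    exact hac0 (hammingDist_eq_zero.mp h0)
  have hcp : c p = b p := (eq_of_ne_dcoord hbc hpq).symm
  have hap : a p ≠ c p := by rw [hcp]; exact dcoord_ne hab
  have hq_mem : q = p' ∨ q = q' := by
    by_contra hcon
    push_neg at hcon
    have haq : a q = c q := hoff' q hcon.1 hcon.2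
    have haq' : a q ≠ c q := by
      rw [eq_of_ne_dcoord hab hpq.symm]
      exact dcoord_ne hbc
    exact haq' haq
  rcases hq_mem with h | h
  · exact h
  · exfalso
    have hpp' : p = p' := by
      by_contra hne
      exact hap (hoff' p hne (h ▸ hpq))
    have hpq2 : p ≠ q' := fun he => hpq (he.trans h.symm)
    have hdp : d p = c p := eq_of_ne_dcoord hdc (hq' ▸ hpq2)
    have hbp : b p = d p := (hdp.trans hcp).symm
    apply hbd
    have hb_upd := eq_update_dcoord hab
    have hd_upd := eq_update_dcoord had
    rw [← hp] at hb_upd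
    rw [← hp'] at hd_upd
    rw [hb_upd, hd_upd, ← hpp', hbp]

/-- The wreath-product automorphism of the Hamming graph. -/
def wreath (π : Equiv.Perm (Fin n)) (σ : ∀ _ : Fin n, Equiv.Perm (Fin m)) :
    Ham m n ≃g Ham m n where
  toEquiv := (Equiv.arrowCongr π (Equiv.refl (Fin m))).trans (Equiv.piCongrRight σ)
  map_rel_iff' := by
    intro x y
    have key : ∀ u v : HV m n,
        hammingDist (fun j => σ j (u (π.symm j))) (fun j => σ j (v (π.symm j)))
          = hammingDist u v := by
      intro u v
      have h1 : hammingDist (fun j => σ j (u (π.symm j))) (fun j => σ j (v (π.symm j)))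
          = hammingDist (fun j => u (π.symm j)) (fun j => v (π.symm j)) :=
        hammingDist_comp (fun j => (σ j : Fin m → Fin m)) (fun j => (σ j).injective)
      rw [h1, hd_def, hd_def]
      apply Finset.card_bij (fun i _ => π.symm i)
      · intro i hi
        rw [mem_dset] at hi ⊢
        exact hi
      · intro i _ j _ hij
        exact π.symm.injective hij
      · intro j hj
        refine ⟨π j, ?_, by simp⟩
        rw [mem_dset] at hj ⊢
        simpa using hj
    show (Ham m n).Adj (fun j => σ j (x (π.symm j))) (fun j => σ j (y (π.symm j))) ↔ _
    rw [ham_adj, ham_adj, key]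

lemma wreath_apply (π : Equiv.Perm (Fin n)) (σ : ∀ _ : Fin n, Equiv.Perm (Fin m))
    (x : HV m n) (j : Fin n) : wreath π σ x j = σ j (x (π.symm j)) := rfl

end Stmt6

namespace Stmt6

variable {m n : ℕ}

def nxt (hm : 2 ≤ m) (a : Fin m) : Fin m :=
  if h : (a : ℕ) + 1 < m then ⟨(a : ℕ) + 1, h⟩ else ⟨0, by omega⟩

lemma nxt_ne (hm : 2 ≤ m) (a : Fin m) : nxt hm a ≠ a := by
  have h2 := a.isLt
  intro he
  unfold nxt at he
  split at he <;> rw [Fin.ext_iff] at he <;> simp only at he <;> omega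

def nbr (hm : 2 ≤ m) (x : HV m n) (i : Fin n) : HV m n := update x i (nxt hm (x i))

lemma hd_nbr (hm : 2 ≤ m) (x : HV m n) (i : Fin n) : hammingDist x (nbr hm x i) = 1 :=
  hd_update x i _ (nxt_ne hm (x i))

variable (φ : Ham m n ≃g Ham m n)

lemma phi_hd1 {x y : HV m n} (h : hammingDist x y = 1) :
    hammingDist (φ x) (φ y) = 1 :=
  ham_adj.mp (φ.map_rel_iff.mpr (ham_adj.mpr h))

lemma phi_hd_le_one {x y : HV m n} (h : hammingDist x y ≤ 1) :
    hammingDist (φ x) (φ y) ≤ 1 := by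
  rcases Nat.le_one_iff_eq_zero_or_eq_one.mp h with h0 | h1
  · rw [hammingDist_eq_zero.mp h0]
    simp [hammingDist_self]
  · rw [phi_hd1 φ h1]

lemma phi_hd_le_one_rev {x y : HV m n} (h : hammingDist (φ x) (φ y) ≤ 1) :
    hammingDist x y ≤ 1 := by
  rcases Nat.le_one_iff_eq_zero_or_eq_one.mp h with h0 | h1
  · have := φ.toEquiv.injective (hammingDist_eq_zero.mp h0)
    rw [this]
    simp [hammingDist_self]
  · have := ham_adj.mp (φ.map_rel_iff.mp (ham_adj.mpr h1))
    omega

noncomputable def pix (hm : 2 ≤ m) (x : HV m n) (i : Fin n) : Fin n :=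
  dcoord (φ x) (φ (nbr hm x i)) (phi_hd1 φ (hd_nbr hm x i))

lemma dcoord_phi (hm : 2 ≤ m) {x y : HV m n} (h : hammingDist x y = 1) :
    dcoord (φ x) (φ y) (phi_hd1 φ h) = pix φ hm x (dcoord x y h) := by
  set i := dcoord x y h with hi
  have h2 : hammingDist x (nbr hm x i) = 1 := hd_nbr hm x i
  have hyz : hammingDist y (nbr hm x i) ≤ 1 := by
    apply hd_le_one_of_eq_off i
    intro j hj
    rw [← eq_of_ne_dcoord h hj]
    rw [nbr, update_of_ne hj]
  exact dcoord_tri (phi_hd1 φ h) (phi_hd1 φ h2) (phi_hd_le_one φ hyz)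

lemma pix_adj (hm : 2 ≤ m) {x y : HV m n} (h : hammingDist x y = 1) :
    pix φ hm x = pix φ hm y := by
  funext i
  set i₀ := dcoord x y h with hi₀
  rcases eq_or_ne i i₀ with rfl | hi
  · have h' : hammingDist y x = 1 := by rwa [hammingDist_comm]
    have e1 : dcoord (φ y) (φ x) (phi_hd1 φ h') = pix φ hm y (dcoord y x h') :=
      dcoord_phi φ hm h'
    rw [dcoord_comm h h'] at e1
    rw [← e1, dcoord_comm (phi_hd1 φ h) (phi_hd1 φ h'), dcoord_phi φ hm h]
  · -- x i = y i
    have hxy_i : x i = y i := eq_of_ne_dcoord h hi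
    set z := nbr hm y i with hz
    have hyz : hammingDist y z = 1 := hd_nbr hm y i
    set w := update x i (nxt hm (y i)) with hw
    have hwx : nxt hm (y i) ≠ x i := by rw [hxy_i]; exact nxt_ne hm (y i)
    have hxw : hammingDist x w = 1 := hd_update x i _ hwx
    -- w = update z i₀ (x i₀)
    have hzw : w = update z i₀ (x i₀) := by
      funext j
      rcases eq_or_ne j i₀ with rfl | hj
      · rw [update_self, hw, update_of_ne (Ne.symm hi)]
      · rw [update_of_ne hj]
        rcases eq_or_ne j i with rfl | hj2
        · rw [hw, update_self, hz, nbr, update_self]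
        · rw [hw, update_of_ne hj2, hz, nbr, update_of_ne hj2,
            eq_of_ne_dcoord h hj]
    have hzi₀ : z i₀ = y i₀ := by rw [hz, nbr, update_of_ne (Ne.symm hi)]
    have hxzi₀ : x i₀ ≠ z i₀ := by rw [hzi₀]; exact dcoord_ne h
    have hwz : hammingDist w z = 1 := by
      rw [hammingDist_comm, hzw]
      exact hd_update z i₀ _ hxzi₀
    have hyw : y ≠ w := by
      intro he
      have hc := congrFun he i₀
      rw [hw, update_of_ne (Ne.symm hi)] at hc
      exact dcoord_ne h hc.symm
    have hxzi : x i ≠ z i := by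
      rw [hz, nbr, update_self, ← hxy_i]
      exact fun he => nxt_ne hm (x i) he.symm
    have hxz2 : 2 ≤ hammingDist x z := two_le_hd hi hxzi hxzi₀
    have hxz0 : x ≠ z := fun he => by rw [he] at hxzi; exact hxzi rfl
    have hxz1 : hammingDist x z ≠ 1 := by omega
    have hfxz0 : φ x ≠ φ z := fun he => hxz0 (φ.toEquiv.injective he)
    have hfxz1 : hammingDist (φ x) (φ z) ≠ 1 := by
      intro he
      exact hxz1 (ham_adj.mp (φ.map_rel_iff.mp (ham_adj.mpr he)))
    have hrect := dcoord_rect (phi_hd1 φ h) (phi_hd1 φ hyz) (phi_hd1 φ hxw)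
      (phi_hd1 φ hwz)
      (fun he => hyw (φ.toEquiv.injective he)) hfxz0 hfxz1
    -- LHS is pix y i, RHS is pix x i
    have eL : dcoord (φ y) (φ z) (phi_hd1 φ hyz) = pix φ hm y i := rfl
    have eR : dcoord (φ x) (φ w) (phi_hd1 φ hxw) = pix φ hm x i := by
      have := dcoord_phi φ hm hxw
      rwa [dcoord_update hwx] at this
    rw [eL, eR] at hrect
    exact hrect.symm

lemma pix_const (hm : 2 ≤ m) (x y : HV m n) : pix φ hm x = pix φ hm y := by
  suffices H : ∀ d (x y : HV m n), hammingDist x y = d → pix φ hm x = pix φ hm y from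
    H _ x y rfl
  intro d
  induction d with
  | zero =>
    intro x y h
    rw [hammingDist_eq_zero.mp h]
  | succ d ih =>
    intro x y h
    have hxy : x ≠ y := by
      intro he
      rw [he, hammingDist_self] at h
      omega
    obtain ⟨i, hi⟩ := Function.ne_iff.mp hxy
    have h1 : hammingDist x (update y i (x i)) + 1 = hammingDist x y := hd_update_toward hi
    have h2 : hammingDist x (update y i (x i)) = d := by omega
    have h3 : hammingDist y (update y i (x i)) = 1 := hd_update y i (x i) hi
    rw [ih x _ h2, pix_adj φ hm h3]

lemma pix_inj (hm : 2 ≤ m) (x : HV m n) : Function.Injective (pix φ hm x) := by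
  intro i i' he
  by_contra hne
  set y := nbr hm x i with hy
  set z := nbr hm x i' with hz
  have hdy : hammingDist x y = 1 := hd_nbr hm x i
  have hdz : hammingDist x z = 1 := hd_nbr hm x i'
  have e1 : dcoord (φ x) (φ y) (phi_hd1 φ hdy) = pix φ hm x i := rfl
  have e2 : dcoord (φ x) (φ z) (phi_hd1 φ hdz) = pix φ hm x i' := rfl
  have hle : hammingDist (φ y) (φ z) ≤ 1 := by
    apply hd_le_one_of_eq_off (pix φ hm x i)
    intro j hj
    have j1 : φ y j = φ x j := (eq_of_ne_dcoord (phi_hd1 φ hdy) (e1 ▸ hj)).symm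
    have j2 : φ x j = φ z j := eq_of_ne_dcoord (phi_hd1 φ hdz) (e2 ▸ (he ▸ hj))
    rw [j1, j2]
  have hyz : hammingDist y z ≤ 1 := phi_hd_le_one_rev φ hle
  have hyi : y i ≠ z i := by
    rw [hy, hz, nbr, nbr, update_self, update_of_ne hne]
    exact nxt_ne hm (x i)
  have hyi' : y i' ≠ z i' := by
    rw [hy, hz, nbr, nbr, update_self, update_of_ne (Ne.symm hne)]
    exact fun h' => nxt_ne hm (x i') h'.symm
  have := two_le_hd hne hyi hyi'
  omega

theorem aut_structure (hm : 2 ≤ m) (φ : Ham m n ≃g Ham m n) :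
    ∃ π : Equiv.Perm (Fin n), ∃ σ : Fin n → (Fin m → Fin m),
      (∀ j, Function.Injective (σ j)) ∧ ∀ (x : HV m n) (j : Fin n), φ x (π j) = σ j (x j) := by
  have hm0 : 0 < m := by omega
  set x₀ : HV m n := fun _ => ⟨0, hm0⟩ with hx₀
  set p := pix φ hm x₀ with hp
  have pbij : Function.Bijective p := Finite.injective_iff_bijective.mp (pix_inj φ hm x₀)
  -- key: φ x (p j) depends only on x j
  have key : ∀ (j : Fin n) (x y : HV m n), x j = y j → φ x (p j) = φ y (p j) := by
    intro j
    suffices H : ∀ d (x y : HV m n), hammingDist x y = d → x j = y j →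
        φ x (p j) = φ y (p j) from fun x y => H _ x y rfl
    intro d
    induction d with
    | zero =>
      intro x y h _
      rw [hammingDist_eq_zero.mp h]
    | succ d ih =>
      intro x y h hj
      have hxy : x ≠ y := by
        intro he
        rw [he, hammingDist_self] at h
        omega
      obtain ⟨i, hi⟩ := Function.ne_iff.mp hxy
      have hij : i ≠ j := fun he => hi (he ▸ hj)
      have h1 : hammingDist x (update y i (x i)) + 1 = hammingDist x y := hd_update_toward hi
      have h2 : hammingDist x (update y i (x i)) = d := by omega
      have h3 : hammingDist y (update y i (x i)) = 1 := hd_update y i (x i) hi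
      have hj' : x j = update y i (x i) j := by rw [update_of_ne (Ne.symm hij)]; exact hj
      have e1 : φ x (p j) = φ (update y i (x i)) (p j) := ih x _ h2 hj'
      -- the edge y — update y i (x i) has image direction p i ≠ p j
      have hdc : dcoord y (update y i (x i)) h3 = i := dcoord_update hi h3
      have e2 : dcoord (φ y) (φ (update y i (x i))) (phi_hd1 φ h3) = p i := by
        rw [dcoord_phi φ hm h3, hdc, hp, pix_const φ hm y x₀]
      have hpij : p j ≠ p i := fun he => hij (pbij.1 he).symm
      have e3 : φ y (p j) = φ (update y i (x i)) (p j) :=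
        eq_of_ne_dcoord (phi_hd1 φ h3) (e2 ▸ hpij)
      rw [e1, ← e3]
  refine ⟨Equiv.ofBijective p pbij, fun j a => φ (update x₀ j a) (p j), ?_, ?_⟩
  · intro j a b hab
    have hfeq : φ (update x₀ j a) = φ (update x₀ j b) := by
      funext j'
      obtain ⟨i, rfl⟩ := pbij.2 j'
      rcases eq_or_ne i j with rfl | hij
      · exact hab
      · exact key i _ _ (by rw [update_of_ne hij, update_of_ne hij])
    have := φ.toEquiv.injective hfeq
    have := congrFun this j
    rwa [update_self, update_self] at this
  · intro x j
    exact key j x (update x₀ j (x j)) (by rw [update_self])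

end Stmt6

namespace Stmt6

variable {m r : ℕ}

def RGS {m r : ℕ} (c : Fin r → Fin m) : Prop :=
  ∀ i : Fin r, ∀ v : Fin m, v < c i → ∃ i' : Fin r, i' < i ∧ c i' = v

instance {m r : ℕ} : DecidablePred (RGS (m := m) (r := r)) := fun c => by
  unfold RGS; infer_instance

def KVal {m r : ℕ} (c : Fin r → Fin m) : ℕ := (Finset.univ.image c).card

lemma kval_le (c : Fin r → Fin m) : KVal c ≤ m := by
  calc KVal c ≤ (Finset.univ : Finset (Fin m)).card := Finset.card_le_univ _
    _ = m := by simp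

lemma kval_def (c : Fin r → Fin m) : KVal c = (Finset.univ.image c).card := rfl

lemma mem_image_iff_lt {c : Fin r → Fin m} (hc : RGS c) {v : Fin m} :
    v ∈ Finset.univ.image c ↔ (v : ℕ) < KVal c := by
  rw [kval_def]
  have hdc : ∀ {v w : Fin m}, v ∈ Finset.univ.image c → w ≤ v → w ∈ Finset.univ.image c := by
    intro v w hv hw
    rcases eq_or_lt_of_le hw with rfl | hlt
    · exact hv
    · simp only [Finset.mem_image, Finset.mem_univ, true_and] at hv ⊢
      obtain ⟨i, rfl⟩ := hv
      obtain ⟨i', _, he⟩ := hc i w hlt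
      exact ⟨i', he⟩
  constructor
  · intro hv
    have hsub : Finset.Iic v ⊆ Finset.univ.image c := fun u hu =>
      hdc hv (Finset.mem_Iic.mp hu)
    have := Finset.card_le_card hsub
    rw [Fin.card_Iic] at this
    omega
  · intro hv
    by_contra hnv
    have hsub : Finset.univ.image c ⊆ Finset.Iio v := by
      intro u hu
      rw [Finset.mem_Iio]
      rcases lt_or_ge u v with h | h
      · exact h
      · exact absurd (hdc hu h) hnv
    have := Finset.card_le_card hsub
    rw [Fin.card_Iio] at this
    omega

lemma image_snoc (c : Fin r → Fin m) (a : Fin m) :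
    Finset.univ.image (Fin.snoc c a : Fin (r + 1) → Fin m)
      = insert a (Finset.univ.image c) := by
  ext v
  simp only [Finset.mem_image, Finset.mem_univ, true_and, Finset.mem_insert]
  constructor
  · rintro ⟨i, rfl⟩
    rcases eq_or_ne i (Fin.last r) with rfl | hne
    · left
      rw [Fin.snoc_last]
    · obtain ⟨j, rfl⟩ := Fin.exists_castSucc_eq.mpr hne
      right
      exact ⟨j, by rw [Fin.snoc_castSucc]⟩
  · rintro (rfl | ⟨i, rfl⟩)
    · exact ⟨Fin.last r, Fin.snoc_last _ _⟩
    · exact ⟨i.castSucc, Fin.snoc_castSucc _ _ _⟩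

lemma kval_snoc_mem {c : Fin r → Fin m} {a : Fin m} (h : a ∈ Finset.univ.image c) :
    KVal (Fin.snoc c a : Fin (r + 1) → Fin m) = KVal c := by
  rw [kval_def, image_snoc, Finset.insert_eq_self.mpr h, ← kval_def]

lemma kval_snoc_not_mem {c : Fin r → Fin m} {a : Fin m} (h : a ∉ Finset.univ.image c) :
    KVal (Fin.snoc c a : Fin (r + 1) → Fin m) = KVal c + 1 := by
  rw [kval_def, image_snoc, Finset.card_insert_of_notMem h, ← kval_def]

lemma rgs_snoc {c : Fin r → Fin m} {a : Fin m} :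
    RGS (Fin.snoc c a : Fin (r + 1) → Fin m) ↔ RGS c ∧ (a : ℕ) ≤ KVal c := by
  constructor
  · intro h
    constructor
    · intro i v hv
      obtain ⟨i', hlt, he⟩ := h i.castSucc v (by rwa [Fin.snoc_castSucc])
      have hne : i' ≠ Fin.last r :=
        Fin.ne_last_of_lt (lt_trans hlt (Fin.castSucc_lt_last i))
      obtain ⟨j, rfl⟩ := Fin.exists_castSucc_eq.mpr hne
      rw [Fin.snoc_castSucc] at he
      exact ⟨j, by rwa [Fin.castSucc_lt_castSucc_iff] at hlt, he⟩
    · have hsub : Finset.Iio a ⊆ Finset.univ.image c := by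
        intro v hv
        rw [Finset.mem_Iio] at hv
        obtain ⟨i', _, he⟩ := h (Fin.last r) v (by rwa [Fin.snoc_last])
        have hne : i' ≠ Fin.last r := Fin.ne_last_of_lt ‹i' < Fin.last r›
        obtain ⟨j, rfl⟩ := Fin.exists_castSucc_eq.mpr hne
        rw [Fin.snoc_castSucc] at he
        simp only [Finset.mem_image, Finset.mem_univ, true_and]
        exact ⟨j, he⟩
      have := Finset.card_le_card hsub
      rw [Fin.card_Iio] at this
      rwa [kval_def]
  · rintro ⟨hc, ha⟩ i v
    induction i using Fin.lastCases with
    | last =>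
      intro hv
      rw [Fin.snoc_last] at hv
      have hlt : (v : ℕ) < KVal c := lt_of_lt_of_le hv ha
      obtain ⟨i₀, -, he⟩ := Finset.mem_image.mp ((mem_image_iff_lt hc).mpr hlt)
      exact ⟨i₀.castSucc, Fin.castSucc_lt_last i₀, by rwa [Fin.snoc_castSucc]⟩
    | cast j =>
      intro hv
      rw [Fin.snoc_castSucc] at hv
      obtain ⟨i', hlt, he⟩ := hc j v hv
      exact ⟨i'.castSucc, by rwa [Fin.castSucc_lt_castSucc_iff], by rwa [Fin.snoc_castSucc]⟩

end Stmt6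

namespace Stmt6

variable {m r : ℕ}

def SFin (m r k : ℕ) : Finset (Fin r → Fin m) :=
  Finset.univ.filter fun c => RGS c ∧ KVal c = k

lemma mem_SFin {k : ℕ} {c : Fin r → Fin m} :
    c ∈ SFin m r k ↔ RGS c ∧ KVal c = k := by
  simp [SFin]

lemma card_filter_le (m t : ℕ) (ht : t ≤ m) :
    (Finset.univ.filter fun a : Fin m => (a : ℕ) < t).card = t := by
  apply Finset.card_eq_of_bijective (fun i hi => ⟨i, lt_of_lt_of_le hi ht⟩)
  · intro a ha
    simp only [Finset.mem_filter, Finset.mem_univ, true_and] at ha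
    exact ⟨(a : ℕ), ha, Fin.ext rfl⟩
  · intro i hi
    simp only [Finset.mem_filter, Finset.mem_univ, true_and]
    exact hi
  · intro i j hi hj hij
    have := congrArg Fin.val hij
    exact this

lemma card_SFin (m : ℕ) : ∀ r k, k ≤ m → (SFin m r k).card = stirling2 r k := by
  intro r
  induction r with
  | zero =>
    intro k _
    match k with
    | 0 =>
      have : SFin m 0 0 = Finset.univ := by
        apply Finset.filter_true_of_mem
        intro c _
        refine ⟨fun i => i.elim0, ?_⟩
        rw [kval_def]
        simp
      rw [stirling2, this, Finset.card_univ, Fintype.card_fun]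
      simp
    | k + 1 =>
      have : SFin m 0 (k + 1) = ∅ := by
        apply Finset.filter_false_of_mem
        intro c _
        rintro ⟨-, hk⟩
        rw [kval_def] at hk
        simp at hk
      rw [this, stirling2]
      simp
  | succ r ih =>
    intro k hk
    match k with
    | 0 =>
      have : SFin m (r + 1) 0 = ∅ := by
        apply Finset.filter_false_of_mem
        intro c _
        rintro ⟨-, hk0⟩
        rw [kval_def] at hk0
        rw [Finset.card_eq_zero] at hk0
        have : c 0 ∈ Finset.univ.image c := Finset.mem_image_of_mem c (Finset.mem_univ _)
        rw [hk0] at this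
        exact absurd this (Finset.notMem_empty _)
      rw [this, stirling2]
      simp
    | k + 1 =>
      have hkm : k < m := by omega
      set B := ((SFin m r (k + 1)) ×ˢ (Finset.univ.filter fun a : Fin m => (a : ℕ) < k + 1))
          ∪ ((SFin m r k) ×ˢ ({⟨k, hkm⟩} : Finset (Fin m))) with hB
      have hcard : (SFin m (r + 1) (k + 1)).card = B.card := by
        apply Finset.card_bij' (fun c _ => (Fin.init c, c (Fin.last r)))
          (fun p _ => Fin.snoc p.1 p.2)
        · intro c hc
          rw [mem_SFin] at hc
          obtain ⟨hrgs, hkv⟩ := hc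
          have hsnoc : (Fin.snoc (Fin.init c) (c (Fin.last r)) : Fin (r+1) → Fin m) = c :=
            Fin.snoc_init_self c
          have h2 : RGS (Fin.init c) ∧ ((c (Fin.last r) : ℕ)) ≤ KVal (Fin.init c) :=
            rgs_snoc.mp (by rwa [hsnoc])
          rw [Finset.mem_union]
          by_cases hmem : c (Fin.last r) ∈ Finset.univ.image (Fin.init c)
          · left
            rw [Finset.mem_product, mem_SFin]
            have : KVal (Fin.init c) = k + 1 := by
              have := kval_snoc_mem hmem
              rw [hsnoc] at this
              omega
            refine ⟨⟨h2.1, this⟩, ?_⟩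
            simp only [Finset.mem_filter, Finset.mem_univ, true_and]
            rw [← this]
            exact (mem_image_iff_lt h2.1).mp hmem
          · right
            rw [Finset.mem_product, mem_SFin]
            have hkv2 : KVal (Fin.init c) = k := by
              have := kval_snoc_not_mem hmem
              rw [hsnoc] at this
              omega
            have hval : (c (Fin.last r) : ℕ) = k := by
              have hnlt := (mem_image_iff_lt h2.1).not.mp hmem
              rw [hkv2] at hnlt
              have := h2.2
              rw [hkv2] at this
              omega
            refine ⟨⟨h2.1, hkv2⟩, ?_⟩
            simp only [Finset.mem_singleton]
            rw [Fin.ext_iff]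
            exact hval
        · intro p hp
          rw [hB] at hp
          simp only [Finset.mem_union, Finset.mem_product] at hp
          rw [mem_SFin]
          rcases hp with ⟨hc, ha⟩ | ⟨hc, ha⟩
          · rw [mem_SFin] at hc
            simp only [Finset.mem_filter, Finset.mem_univ, true_and] at ha
            have hmem : p.2 ∈ Finset.univ.image p.1 := by
              rw [mem_image_iff_lt hc.1, hc.2]
              exact ha
            refine ⟨rgs_snoc.mpr ⟨hc.1, by omega⟩, ?_⟩
            rw [kval_snoc_mem hmem]
            exact hc.2
          · rw [mem_SFin] at hc
            simp only [Finset.mem_singleton] at ha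
            have hval : (p.2 : ℕ) = k := by rw [ha]
            have hmem : p.2 ∉ Finset.univ.image p.1 := by
              rw [mem_image_iff_lt hc.1, hc.2]
              omega
            refine ⟨rgs_snoc.mpr ⟨hc.1, by omega⟩, ?_⟩
            rw [kval_snoc_not_mem hmem, hc.2]
        · intro c _
          exact Fin.snoc_init_self c
        · intro p _
          simp only [Fin.init_snoc, Fin.snoc_last]
      have hdisj : Disjoint ((SFin m r (k + 1)) ×ˢ (Finset.univ.filter fun a : Fin m => (a : ℕ) < k + 1))
          ((SFin m r k) ×ˢ ({⟨k, hkm⟩} : Finset (Fin m))) := by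
        rw [Finset.disjoint_left]
        rintro ⟨c, a⟩ h1 h2
        rw [Finset.mem_product, mem_SFin] at h1 h2
        omega
      rw [hcard, hB, Finset.card_union_of_disjoint hdisj, Finset.card_product,
        Finset.card_product, card_filter_le m (k + 1) hk,
        ih (k + 1) hk, ih k (by omega), Finset.card_singleton, stirling2]
      ring

end Stmt6

namespace Stmt6

variable {m r : ℕ}

lemma kval_comp_perm (σ : Equiv.Perm (Fin m)) (c : Fin r → Fin m) :
    KVal (σ ∘ c) = KVal c := by
  rw [kval_def, kval_def, ← Finset.image_image, Finset.card_image_of_injective _ σ.injective]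

lemma exists_rgs_perm : ∀ {r : ℕ} (c : Fin r → Fin m), ∃ σ : Equiv.Perm (Fin m), RGS (σ ∘ c) := by
  intro r
  induction r with
  | zero =>
    intro c
    exact ⟨1, fun i => i.elim0⟩
  | succ r ih =>
    intro c
    obtain ⟨σ, hσ⟩ := ih (Fin.init c)
    set d := σ ∘ Fin.init c with hd
    set b := σ (c (Fin.last r)) with hb
    rcases le_or_gt (b : ℕ) (KVal d) with hble | hgt
    · refine ⟨σ, ?_⟩
      have he : σ ∘ c = Fin.snoc d b := by
        funext i
        induction i using Fin.lastCases with
        | last => rw [Fin.snoc_last]; rfl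
        | cast j => rw [Fin.snoc_castSucc]; rfl
      rw [he]
      exact rgs_snoc.mpr ⟨hσ, hble⟩
    · have hKm : KVal d < m := lt_trans hgt b.isLt
      set K : Fin m := ⟨KVal d, hKm⟩ with hK
      have hKval : (K : ℕ) = KVal d := rfl
      refine ⟨σ.trans (Equiv.swap b K), ?_⟩
      have he : (σ.trans (Equiv.swap b K)) ∘ c = Fin.snoc d K := by
        funext i
        induction i using Fin.lastCases with
        | last =>
          rw [Fin.snoc_last]
          show Equiv.swap b K (σ (c (Fin.last r))) = K
          rw [← hb, Equiv.swap_apply_left]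
        | cast j =>
          rw [Fin.snoc_castSucc]
          show Equiv.swap b K (σ (Fin.init c j)) = d j
          have hdj : σ (Fin.init c j) = d j := rfl
          rw [hdj]
          have hmem : d j ∈ Finset.univ.image d := Finset.mem_image_of_mem d (Finset.mem_univ j)
          have hlt : ((d j : ℕ)) < KVal d := (mem_image_iff_lt hσ).mp hmem
          apply Equiv.swap_apply_of_ne_of_ne
          · intro he2
            rw [he2] at hlt
            omega
          · intro he2
            rw [he2, hKval] at hlt
            omega
      rw [he]
      exact rgs_snoc.mpr ⟨hσ, le_of_eq hKval⟩

lemma rgs_unique {c c' : Fin r → Fin m} {g : Fin m → Fin m} (hg : Function.Injective g)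
    (hc : RGS c) (hc' : RGS c') (he : g ∘ c = c') : c = c' := by
  suffices H : ∀ N (i : Fin r), (i : ℕ) < N → c i = c' i by
    funext i
    exact H r i i.isLt
  intro N
  induction N with
  | zero => exact fun i hi => absurd hi (by omega)
  | succ N ih =>
    intro i hi
    have IH : ∀ i' : Fin r, i' < i → c i' = c' i' := by
      intro i' h'
      refine ih i' ?_
      have := Fin.lt_def.mp h'
      omega
    rcases lt_trichotomy (c' i) (c i) with hlt | heq | hlt
    · exfalso
      obtain ⟨i', hi', he1⟩ := hc i (c' i) hlt
      have e2 : c' i' = c i' := (IH i' hi').symm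
      have e3 : g (c i') = c' i' := congrFun he i'
      have e4 : g (c i) = c' i := congrFun he i
      have : c i' = c i := hg (by rw [e3, e2, he1, e4])
      rw [this] at he1
      rw [he1] at hlt
      exact lt_irrefl _ hlt
    · exact heq.symm
    · exfalso
      obtain ⟨i', hi', he1⟩ := hc' i (c i) hlt
      have e2 : c i' = c' i' := IH i' hi'
      have e4 : g (c i) = c' i := congrFun he i
      have e5 : g (c i') = c' i' := congrFun he i'
      have e6 : c i' = c i := by rw [e2, he1]
      have e7 : c' i' = c' i := by rw [← e5, ← e4, e6]
      rw [he1] at e7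
      rw [e7] at hlt
      exact lt_irrefl _ hlt

/-- Injective self-maps fixing at least `m - 1` points are the identity. -/
lemma inj_fix_of_card {g : Fin m → Fin m} (hg : Function.Injective g) (s : Finset (Fin m))
    (hcard : m - 1 ≤ s.card) (hfix : ∀ a ∈ s, g a = a) : ∀ a, g a = a := by
  intro a
  by_cases ha : a ∈ s
  · exact hfix a ha
  · by_contra hne
    have hga : g a ∉ s := by
      intro hmem
      have := hfix (g a) hmem
      have h2 : g a = a := hg this
      exact ha (h2 ▸ hmem)
    have hsub : ({a, g a} : Finset (Fin m)) ⊆ sᶜ := by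
      intro x hx
      rw [Finset.mem_compl]
      rcases Finset.mem_insert.mp hx with rfl | hx2
      · exact ha
      · rw [Finset.mem_singleton] at hx2
        rw [hx2]
        exact hga
    have h2 : ({a, g a} : Finset (Fin m)).card = 2 := Finset.card_pair (fun h => hne h.symm)
    have h3 : (sᶜ : Finset (Fin m)).card = m - s.card := by
      rw [Finset.card_compl]
      simp
    have h4 := Finset.card_le_card hsub
    have h5 : s.card ≤ m := by
      calc s.card ≤ (Finset.univ : Finset (Fin m)).card := Finset.card_le_univ _
        _ = m := by simp
    omega

lemma stirling2_eq_zero_of_lt : ∀ {r k : ℕ}, r < k → stirling2 r k = 0 := by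
  intro r
  induction r with
  | zero =>
    intro k hk
    match k, hk with
    | k + 1, _ => rfl
  | succ r ih =>
    intro k hk
    match k, hk with
    | k + 1, hk =>
      rw [stirling2, ih (by omega), ih (by omega)]
      ring

lemma stirling2_self : ∀ k, stirling2 k k = 1 := by
  intro k
  induction k with
  | zero => rfl
  | succ k ih =>
    rw [stirling2, ih, stirling2_eq_zero_of_lt (by omega)]
    ring

lemma stirling2_pos : ∀ r k, k ≤ r → 1 ≤ k → 0 < stirling2 r k := by
  intro r
  induction r with
  | zero => intro k h1 h2; omega
  | succ r ih =>
    intro k h1 h2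
    match k with
    | k + 1 =>
      rw [stirling2]
      rcases Nat.eq_zero_or_pos k with rfl | hk
      · rcases Nat.eq_zero_or_pos r with rfl | hr
        · simp [stirling2]
        · have := ih 1 (by omega) (by omega)
          simp only [Nat.zero_add, one_mul]
          omega
      · have := ih k (by omega) (by omega)
        have h2 := Nat.le_add_left 1 k
        nlinarith [Nat.zero_le (stirling2 r (k+1))]

/-- Growth of `stirling2 r m + stirling2 r (m-1)`. -/
lemma stirling_sum_grows (hm : 2 ≤ m) :
    ∀ s, s + 1 ≤ stirling2 (m - 1 + s) m + stirling2 (m - 1 + s) (m - 1) := by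
  intro s
  induction s with
  | zero =>
    have := stirling2_self (m - 1)
    simp only [Nat.add_zero]
    omega
  | succ s ih =>
    have hr : m - 1 + (s + 1) = (m - 1 + s) + 1 := by omega
    rw [hr]
    set r := m - 1 + s with hrdef
    have e1 : stirling2 (r + 1) m = m * stirling2 r m + stirling2 r (m - 1) := by
      have hm1 : m = (m - 1) + 1 := by omega
      calc stirling2 (r + 1) m = stirling2 (r + 1) ((m - 1) + 1) := by rw [← hm1]
        _ = ((m - 1) + 1) * stirling2 r ((m - 1) + 1) + stirling2 r (m - 1) := by
            rw [stirling2]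
        _ = m * stirling2 r m + stirling2 r (m - 1) := by rw [← hm1]
    have hpos : 0 < stirling2 (r + 1) (m - 1) :=
      stirling2_pos (r + 1) (m - 1) (by omega) (by omega)
    have hmono : stirling2 r m + stirling2 r (m - 1) ≤ stirling2 (r + 1) m := by
      rw [e1]
      have : stirling2 r m ≤ m * stirling2 r m := Nat.le_mul_of_pos_left _ (by omega)
      omega
    have := Nat.zero_le (stirling2 (r + 1) (m - 1))
    omega

end Stmt6

namespace Stmt6

def GoodF (m r : ℕ) : Finset (Fin r → Fin m) :=
  Finset.univ.filter fun c => RGS c ∧ m - 1 ≤ KVal c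

lemma mem_GoodF {m r : ℕ} {c : Fin r → Fin m} :
    c ∈ GoodF m r ↔ RGS c ∧ m - 1 ≤ KVal c := by
  simp [GoodF]

lemma card_GoodF {m : ℕ} (hm : 2 ≤ m) (r : ℕ) :
    (GoodF m r).card = stirling2 r m + stirling2 r (m - 1) := by
  have hU : GoodF m r = SFin m r m ∪ SFin m r (m - 1) := by
    ext c
    rw [mem_GoodF, Finset.mem_union, mem_SFin, mem_SFin]
    have hle := kval_le c
    constructor
    · rintro ⟨h1, h2⟩
      by_cases h : KVal c = m
      · exact Or.inl ⟨h1, h⟩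
      · exact Or.inr ⟨h1, by omega⟩
    · rintro (⟨h1, h2⟩ | ⟨h1, h2⟩) <;> exact ⟨h1, by omega⟩
  have hdisj : Disjoint (SFin m r m) (SFin m r (m - 1)) := by
    rw [Finset.disjoint_left]
    intro c h1 h2
    rw [mem_SFin] at h1 h2
    omega
  rw [hU, Finset.card_union_of_disjoint hdisj, card_SFin m r m le_rfl,
    card_SFin m r (m - 1) (by omega)]

end Stmt6

/-- `det(H(m,n))` is the smallest `r` such that `n ≤ S(r,m) + S(r,m-1)`. -/
theorem stmt6 (m n : ℕ) (hm : 2 ≤ m) (hn : 1 ≤ n) :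
    detNum (Ham m n) = sInf {r | n ≤ stirling2 r m + stirling2 r (m - 1)} := by
  classical
  open Stmt6 in
  set B : Set ℕ := {r | n ≤ stirling2 r m + stirling2 r (m - 1)} with hBdef
  set A : Set ℕ :=
    {r | ∃ S : Set (Fin n → Fin m), S.ncard = r ∧ IsDeterminingSet (Ham m n) S} with hAdef
  have hBne : B.Nonempty := by
    have hgrow := Stmt6.stirling_sum_grows hm (n - 1)
    refine ⟨m - 1 + (n - 1), ?_⟩
    simp only [hBdef, Set.mem_setOf_eq]
    omega
  have hAne : A.Nonempty :=
    ⟨(Set.univ : Set (Fin n → Fin m)).ncard, Set.univ, rfl, fun φ h v => h v (Set.mem_univ v)⟩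
  -- Lower bound : every determining set size is in B
  have hAB : A ⊆ B := by
    rintro r ⟨S, hScard, hSdet⟩
    simp only [hBdef, Set.mem_setOf_eq]
    by_contra hlt
    push_neg at hlt
    -- enumerate S
    have hSfin : S.Finite := Set.toFinite S
    have hFcard : Fintype.card hSfin.toFinset = r := by
      rw [Fintype.card_coe, ← Set.ncard_eq_toFinset_card S hSfin, hScard]
    obtain e := Fintype.equivFinOfCardEq hFcard
    set X : Fin r → (Fin n → Fin m) := fun i => ((e.symm i : hSfin.toFinset) : Fin n → Fin m)
      with hX
    have hXmem : ∀ v ∈ S, ∃ i, X i = v := by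
      intro v hv
      refine ⟨e ⟨v, hSfin.mem_toFinset.mpr hv⟩, ?_⟩
      rw [hX]
      simp
    set col : Fin n → (Fin r → Fin m) := fun j i => X i j with hcol
    by_cases hbad : ∃ j, KVal (col j) < m - 1
    · -- a deficient column gives a nontrivial automorphism fixing S
      obtain ⟨j, hj⟩ := hbad
      have hcompl : 1 < ((Finset.univ.image (col j))ᶜ : Finset (Fin m)).card := by
        rw [Finset.card_compl, Fintype.card_fin]
        rw [kval_def] at hj
        omega
      obtain ⟨a, ha, b, hb, hab⟩ := Finset.one_lt_card.mp hcompl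
      rw [Finset.mem_compl] at ha hb
      set σ : Fin n → Equiv.Perm (Fin m) := fun j' => if j' = j then Equiv.swap a b else 1
        with hσ
      set φ := wreath (1 : Equiv.Perm (Fin n)) σ with hφ
      have hfix : ∀ v ∈ S, φ v = v := by
        intro v hv
        obtain ⟨i, rfl⟩ := hXmem v hv
        funext j'
        rw [hφ, wreath_apply]
        have h1 : (1 : Equiv.Perm (Fin n)).symm j' = j' := rfl
        rw [h1, hσ]
        dsimp only
        by_cases hj' : j' = j
        · subst hj'
          rw [if_pos rfl]
          have hmem : X i j' ∈ Finset.univ.image (col j') :=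
            Finset.mem_image_of_mem _ (Finset.mem_univ i)
          exact Equiv.swap_apply_of_ne_of_ne
            (fun he => ha (he ▸ hmem)) (fun he => hb (he ▸ hmem))
        · rw [if_neg hj']
          rfl
      have := hSdet φ hfix (fun _ => a)
      have hcontra := congrFun this j
      rw [hφ, wreath_apply, hσ] at hcontra
      dsimp only at hcontra
      rw [if_pos rfl] at hcontra
      rw [Equiv.swap_apply_left] at hcontra
      exact hab hcontra.symm
    · push_neg at hbad
      -- all columns good: pigeonhole gives two equivalent columns
      set σc : Fin n → Equiv.Perm (Fin m) := fun j => (exists_rgs_perm (col j)).choose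
        with hσc
      have hσrgs : ∀ j, RGS (σc j ∘ col j) := fun j => (exists_rgs_perm (col j)).choose_spec
      have hmemG : ∀ j, (σc j ∘ col j) ∈ GoodF m r := by
        intro j
        rw [mem_GoodF]
        exact ⟨hσrgs j, by rw [kval_comp_perm]; exact hbad j⟩
      set g : Fin n → {c // c ∈ GoodF m r} := fun j => ⟨σc j ∘ col j, hmemG j⟩ with hg
      have hcard : Fintype.card {c // c ∈ GoodF m r} < Fintype.card (Fin n) := by
        rw [Fintype.card_fin, Fintype.card_coe, card_GoodF hm r]
        exact hlt
      obtain ⟨j, k, hjk, hgeq⟩ := Fintype.exists_ne_map_eq_of_card_lt g hcard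
      have hce : σc j ∘ col j = σc k ∘ col k := congrArg Subtype.val hgeq
      set τ : Equiv.Perm (Fin m) := (σc k)⁻¹ * σc j with hτ
      have hτc : ∀ i, τ (col j i) = col k i := by
        intro i
        have := congrFun hce i
        simp only [Function.comp_apply] at this
        rw [hτ]
        simp only [Equiv.Perm.mul_apply]
        rw [this]
        simp
      set σ : Fin n → Equiv.Perm (Fin m) :=
        fun j' => if j' = j then τ⁻¹ else if j' = k then τ else 1 with hσ
      set φ := wreath (Equiv.swap j k) σ with hφ
      have hsymm : (Equiv.swap j k).symm = Equiv.swap j k := Equiv.symm_swap j k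
      have hfix : ∀ v ∈ S, φ v = v := by
        intro v hv
        obtain ⟨i, rfl⟩ := hXmem v hv
        funext j'
        rw [hφ, wreath_apply, hsymm, hσ]
        dsimp only
        by_cases h1 : j' = j
        · subst h1
          rw [if_pos rfl]
          rw [Equiv.swap_apply_left]
          have : X i k = col k i := rfl
          rw [this, ← hτc i]
          simp only [Equiv.Perm.inv_def, Equiv.symm_apply_apply]; rfl
        · by_cases h2 : j' = k
          · subst h2
            rw [if_neg h1, if_pos rfl]
            rw [Equiv.swap_apply_right]
            exact hτc i
          · rw [if_neg h1, if_neg h2]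
            rw [Equiv.swap_apply_of_ne_of_ne h1 h2]
            rfl
      have hmlt : (1 : ℕ) < m := by omega
      set za : Fin m := ⟨0, by omega⟩ with hza
      set zb : Fin m := ⟨1, hmlt⟩ with hzb
      set w : Fin n → Fin m := Function.update (fun _ => za) k (τ zb) with hw
      have := hSdet φ hfix w
      have hcontra := congrFun this j
      rw [hφ, wreath_apply, hsymm, hσ] at hcontra
      dsimp only at hcontra
      rw [if_pos rfl] at hcontra
      rw [Equiv.swap_apply_left] at hcontra
      rw [hw] at hcontra
      rw [Function.update_self] at hcontra
      rw [Function.update_of_ne hjk] at hcontra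
      simp only [Equiv.Perm.inv_def, Equiv.symm_apply_apply] at hcontra
      have : (1 : ℕ) = 0 := congrArg Fin.val hcontra
      omega
  -- Upper bound : a determining set of size ≤ sInf B
  have hupper : ∃ s ∈ A, s ≤ sInf B := by
    have hr₀ : sInf B ∈ B := Nat.sInf_mem hBne
    set r₀ := sInf B with hr₀def
    simp only [hBdef, Set.mem_setOf_eq] at hr₀
    have hcard : Fintype.card (Fin n) ≤ Fintype.card {c // c ∈ GoodF m r₀} := by
      rw [Fintype.card_fin, Fintype.card_coe, card_GoodF hm r₀]
      exact hr₀
    obtain ⟨E⟩ := Function.Embedding.nonempty_of_card_le hcard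
    set X : Fin r₀ → (Fin n → Fin m) := fun i j => (E j).1 i with hX
    have hdet : IsDeterminingSet (Ham m n) (Set.range X) := by
      intro φ hfixS
      obtain ⟨π, σ, hσinj, heq⟩ := aut_structure hm φ
      have hcols : ∀ j i, X i (π j) = σ j (X i j) := by
        intro j i
        have hfx : φ (X i) = X i := hfixS (X i) (Set.mem_range_self i)
        rw [← heq (X i) j, hfx]
      have hπ : ∀ j, π j = j := by
        intro j
        have h1 : σ j ∘ (E j).1 = (E (π j)).1 := by
          funext i
          exact (hcols j i).symm
        have h2 := (mem_GoodF.mp (E j).2).1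
        have h3 := (mem_GoodF.mp (E (π j)).2).1
        have h4 : (E j).1 = (E (π j)).1 := rgs_unique (hσinj j) h2 h3 h1
        have h5 : E j = E (π j) := Subtype.ext h4
        exact (E.injective h5).symm
      have hσid : ∀ j a, σ j a = a := by
        intro j
        apply inj_fix_of_card (hσinj j) (Finset.univ.image (E j).1)
        · exact (mem_GoodF.mp (E j).2).2
        · intro a ha
          obtain ⟨i, -, rfl⟩ := Finset.mem_image.mp ha
          have := hcols j i
          rw [hπ j] at this
          exact this.symm
      intro v
      funext j
      have := heq v j
      rw [hπ j, hσid j] at this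
      exact this
    refine ⟨(Set.range X).ncard, ⟨Set.range X, rfl, hdet⟩, ?_⟩
    calc (Set.range X).ncard = (X '' Set.univ).ncard := by rw [Set.image_univ]
      _ ≤ (Set.univ : Set (Fin r₀)).ncard := Set.ncard_image_le Set.finite_univ
      _ = r₀ := by rw [Set.ncard_univ, Nat.card_eq_fintype_card, Fintype.card_fin]
  -- conclude
  obtain ⟨s, hsA, hs⟩ := hupper
  have h1 : sInf B ≤ sInf A := Nat.sInf_le (hAB (Nat.sInf_mem hAne))
  have h2 : sInf A ≤ s := Nat.sInf_le hsA
  have hdet : detNum (Ham m n) = sInf A := rfl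
  rw [hdet]
  omega
end

section
/- For n ≥ 4, if S is a determining set for the folded hypercube FQ_n, then for every position i ∈ [n] there exists a vertex v ∈ S with v_i = 1. -/
/-- The folded hypercube `FQ_n`: binary `n`-vectors, adjacent iff their Hamming
distance is 1 or `n`. -/
def FQ (n : ℕ) : SimpleGraph (Fin n → ZMod 2) :=
  SimpleGraph.fromRel (fun x y => hammingDist x y = 1 ∨ hammingDist x y = n)

def psi {n : ℕ} (i : Fin n) (x : Fin n → ZMod 2) : Fin n → ZMod 2 :=
  fun j => if j = i then x j else x j + x i

lemma psi_invol {n : ℕ} (i : Fin n) : Function.Involutive (psi i) := by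
  intro x
  funext j
  simp only [psi]
  by_cases h : j = i <;> simp [h]
  · ring_nf
    simp [show (2 : ZMod 2) = 0 from rfl]

lemma psi_dist_ne {n : ℕ} (i : Fin n) (x y : Fin n → ZMod 2) (h : x i ≠ y i) :
    hammingDist (psi i x) (psi i y) = n + 1 - hammingDist x y := by
  classical
  have hyi : y i = x i + 1 := by
    revert h; generalize x i = a; generalize y i = b; revert a b; decide
  have key : ∀ j, (psi i x j ≠ psi i y j) ↔ (j = i ∨ x j = y j) := by
    intro j
    by_cases hj : j = i
    · subst hj; simp [psi, h]
    · simp only [psi, if_neg hj, hyi]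
      constructor
      · intro hne
        right
        by_contra hxy
        apply hne
        revert hxy
        generalize x j = a; generalize y j = b; generalize x i = c
        revert a b c; decide
      · rintro (h'|h')
        · exact absurd h' hj
        · rw [h']
          generalize y j = a; generalize x i = c
          revert a c; decide
  have : hammingDist (psi i x) (psi i y) =
      ({j | j = i ∨ x j = y j} : Finset (Fin n)).card := by
    unfold hammingDist
    congr 1
    ext j
    simp [key j]
  rw [this]
  have hsplit : ({j | j = i ∨ x j = y j} : Finset (Fin n)) =
      insert i ({j | x j = y j} : Finset (Fin n)) := by
    ext j; simp [or_comm]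

  rw [hsplit, Finset.card_insert_of_notMem (by simp [h])]
  have hcompl : ({j | x j = y j} : Finset (Fin n)).card = n - hammingDist x y := by
    have := Finset.card_filter_add_card_filter_not
      (s := (Finset.univ : Finset (Fin n))) (p := fun j => x j = y j)
    simp only [Finset.card_univ, Fintype.card_fin] at this
    unfold hammingDist
    have h2 : ({j | x j ≠ y j} : Finset (Fin n)) = Finset.univ.filter (fun j => ¬ x j = y j) := by
      ext j; simp
    rw [h2]
    omega
  have hle : hammingDist x y ≤ n := by
    simpa using (hammingDist_le_card_fintype (x := x) (y := y))
  have hpos : 1 ≤ hammingDist x y := by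
    have : x ≠ y := fun he => h (by rw [he])
    have := hammingDist_pos.mpr this
    omega
  omega

lemma psi_dist_eq {n : ℕ} (i : Fin n) (x y : Fin n → ZMod 2) (h : x i = y i) :
    hammingDist (psi i x) (psi i y) = hammingDist x y := by
  unfold hammingDist
  congr 1
  ext j
  by_cases hj : j = i <;> simp [psi, hj, h]

lemma psi_adj {n : ℕ} (hn : 1 ≤ n) (i : Fin n) (x y : Fin n → ZMod 2)
    (h : (FQ n).Adj x y) : (FQ n).Adj (psi i x) (psi i y) := by
  rw [FQ, SimpleGraph.fromRel_adj] at h ⊢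
  obtain ⟨hne, hd⟩ := h
  have hd' : hammingDist x y = 1 ∨ hammingDist x y = n := by
    rcases hd with h | h
    · exact h
    · rw [hammingDist_comm]; exact h
  refine ⟨fun he => hne ((psi_invol i).injective he), ?_⟩
  left
  by_cases hi : x i = y i
  · rw [psi_dist_eq i x y hi]; exact hd'
  · rw [psi_dist_ne i x y hi]
    omega

def psiIso {n : ℕ} (hn : 1 ≤ n) (i : Fin n) : FQ n ≃g FQ n where
  toEquiv := (psi_invol i).toPerm
  map_rel_iff' := by
    intro x y
    constructor
    · intro h
      have := psi_adj hn i _ _ h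
      simpa [psi_invol i x, psi_invol i y] using this
    · exact psi_adj hn i x y

/-- For `n ≥ 4`, if `S` is a determining set for `FQ_n`, then for each position
`i` some vertex of `S` has a 1 in position `i`. -/
theorem stmt9 (n : ℕ) (hn : 4 ≤ n) (S : Set (Fin n → ZMod 2))
    (hS : IsDeterminingSet (FQ n) S) : ∀ i : Fin n, ∃ v ∈ S, v i = 1 := by
  intro i
  by_contra hc
  push_neg at hc
  have hzero : ∀ v ∈ S, v i = 0 := by
    intro v hv
    have := hc v hv
    revert this
    generalize v i = a
    revert a; decide
  have hfix : ∀ v ∈ S, psiIso (by omega : 1 ≤ n) i v = v := by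
    intro v hv
    have hvi := hzero v hv
    funext j
    show psi i v j = v j
    by_cases hj : j = i <;> simp [psi, hj, hvi]
  have hall := hS (psiIso (by omega) i) hfix
  -- take delta vector
  set δ : Fin n → ZMod 2 := fun j => if j = i then 1 else 0 with hδ
  have h1 := hall δ
  -- find j ≠ i
  obtain ⟨j, hj⟩ : ∃ j : Fin n, j ≠ i := by
    have : Nontrivial (Fin n) := Fin.nontrivial_iff_two_le.mpr (by omega)
    exact exists_ne i
  have := congr_fun h1 j
  show False
  have hψ : psi i δ j = 1 := by simp [psi, hj, hδ]
  have hδj : δ j = 0 := by simp [hδ, hj]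
  have : psi i δ j = δ j := this
  rw [hψ, hδj] at this
  exact one_ne_zero this
end

section
/- For n ≥ 4, the determining number of the folded hypercube satisfies ⌈lg(n+1)⌉ + 1 ≤ det(FQ_n) ≤ ⌈lg n⌉ + 2, where lg denotes base-2 logarithm. -/
open Finset

section Infra
variable {n : ℕ}

lemma z2_add_self : ∀ a : ZMod 2, a + a = 0 := by decide
lemma z2_ne_iff : ∀ a b : ZMod 2, a ≠ b ↔ a = b + 1 := by decide
lemma z2_cases : ∀ a : ZMod 2, a = 0 ∨ a = 1 := by decide

lemma vadd_self (x : Fin n → ZMod 2) : x + x = 0 := by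
  funext i; exact z2_add_self (x i)

lemma vadd_cancel (x y : Fin n → ZMod 2) : x + (x + y) = y := by
  rw [← add_assoc, vadd_self, zero_add]

lemma hd_add_right (x y z : Fin n → ZMod 2) :
    hammingDist (x + z) (y + z) = hammingDist x y := by
  unfold hammingDist
  congr 1
  apply Finset.filter_congr
  intro i _
  simp [add_left_inj]

lemma hd_comp_equiv {m : ℕ} (e : Fin m ≃ Fin m) (x y : Fin m → ZMod 2) :
    hammingDist (x ∘ e) (y ∘ e) = hammingDist x y := by
  unfold hammingDist
  apply Finset.card_bij (fun i _ => e i)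
  · intro a ha; simp only [mem_filter, mem_univ, true_and] at *; exact ha
  · intro a _ b _ h; exact e.injective h
  · intro b hb
    refine ⟨e.symm b, ?_, by simp⟩
    simp only [mem_filter, mem_univ, true_and, Function.comp_apply, Equiv.apply_symm_apply] at *
    exact hb

lemma hd_eq_wt (x y : Fin n → ZMod 2) :
    hammingDist x y = hammingDist (x + y) 0 := by
  have := hd_add_right x y y
  rw [vadd_self] at this
  exact this.symm

lemma wt_filter (z : Fin n → ZMod 2) :
    hammingDist z 0 = #{i | z i ≠ 0} := rfl

lemma wt_single (i : Fin n) : hammingDist (Pi.single i 1 : Fin n → ZMod 2) 0 = 1 := by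
  rw [wt_filter]
  have : ({i_1 | (Pi.single i 1 : Fin n → ZMod 2) i_1 ≠ 0} : Finset (Fin n)) = {i} := by
    ext j
    simp only [mem_filter, mem_univ, true_and, mem_singleton]
    constructor
    · intro h
      by_contra hji
      exact h (by simp [Pi.single_apply, hji])
    · rintro rfl; simp
  rw [this, card_singleton]

lemma wt_single_add_single {i j : Fin n} (h : i ≠ j) :
    hammingDist (Pi.single i 1 + Pi.single j 1 : Fin n → ZMod 2) 0 = 2 := by
  rw [wt_filter]
  have : ({k | (Pi.single i 1 + Pi.single j 1 : Fin n → ZMod 2) k ≠ 0} : Finset (Fin n))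
      = {i, j} := by
    ext k
    simp only [mem_filter, mem_univ, true_and, mem_insert, mem_singleton, Pi.add_apply,
      Pi.single_apply]
    have hij : ¬ i = j := h
    have hji : ¬ j = i := fun hh => h hh.symm
    by_cases hki : k = i <;> by_cases hkj : k = j
    · exact absurd (hki ▸ hkj) (hki ▸ h)
    · subst hki; simp [hij, hkj]
    · subst hkj; simp [hji, hki]
    · simp [hki, hkj]
  rw [this, card_insert_of_notMem (by simpa using h), card_singleton]

lemma wt_eq_one_iff {v : Fin n → ZMod 2} :
    hammingDist v 0 = 1 ↔ ∃ i, v = Pi.single i 1 := by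
  constructor
  · intro h
    rw [wt_filter, Finset.card_eq_one] at h
    obtain ⟨i, hi⟩ := h
    refine ⟨i, funext fun j => ?_⟩
    have hmem : ∀ k : Fin n, v k ≠ 0 ↔ k = i := by
      intro k
      have := Finset.ext_iff.mp hi k
      simpa using this
    by_cases hji : j = i
    · subst hji
      have hne : v j ≠ 0 := (hmem j).mpr rfl
      rcases z2_cases (v j) with h0 | h1
      · exact absurd h0 hne
      · simp [h1, Pi.single_apply]
    · have : v j = 0 := by
        by_contra hne
        exact hji ((hmem j).mp hne)
      simp [this, Pi.single_apply, hji]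
  · rintro ⟨i, rfl⟩; exact wt_single i

lemma wt_eq_n_iff {v : Fin n → ZMod 2} :
    hammingDist v 0 = n ↔ v = 1 := by
  constructor
  · intro h
    rw [wt_filter] at h
    have huniv : ({i | v i ≠ 0} : Finset (Fin n)) = univ :=
      Finset.eq_univ_of_card _ (by simpa using h)
    funext i
    have : v i ≠ 0 := by
      have := Finset.ext_iff.mp huniv i
      simpa using this
    rcases z2_cases (v i) with h0 | h1
    · exact absurd h0 this
    · simpa using h1
  · rintro rfl
    rw [wt_filter]
    have : ({i | (1 : Fin n → ZMod 2) i ≠ 0} : Finset (Fin n)) = univ := by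
      apply Finset.eq_univ_of_forall
      intro i; simp
    rw [this, card_univ, Fintype.card_fin]

lemma hd_eq_n_iff {x y : Fin n → ZMod 2} :
    hammingDist x y = n ↔ x = 1 + y := by
  rw [hd_eq_wt, wt_eq_n_iff]
  constructor
  · intro h
    have := congrArg (· + y) h
    simpa [add_assoc, vadd_self] using this
  · rintro rfl
    rw [add_assoc, vadd_self, add_zero]

lemma wt_add_single_mem {z : Fin n → ZMod 2} {i : Fin n} (h : z i ≠ 0) :
    hammingDist (z + Pi.single i 1) 0 + 1 = hammingDist z 0 := by
  rw [wt_filter, wt_filter]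
  have key : ({k | (z + Pi.single i 1 : Fin n → ZMod 2) k ≠ 0} : Finset (Fin n))
      = ({k | z k ≠ 0} : Finset (Fin n)).erase i := by
    ext k
    simp only [mem_filter, mem_univ, true_and, mem_erase, Pi.add_apply, Pi.single_apply]
    by_cases hki : k = i
    · subst hki
      have : z k = 1 := by rcases z2_cases (z k) with h0 | h1; exact absurd h0 h; exact h1
      simp [this]
      decide
    · simp [hki]
  rw [key]
  have hmem : i ∈ ({k | z k ≠ 0} : Finset (Fin n)) := by simp [h]
  rw [Finset.card_erase_of_mem hmem]
  have : 1 ≤ ({k | z k ≠ 0} : Finset (Fin n)).card := Finset.card_pos.mpr ⟨i, hmem⟩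
  omega

lemma wt_add_single_notmem {z : Fin n → ZMod 2} {i : Fin n} (h : z i = 0) :
    hammingDist (z + Pi.single i 1) 0 = hammingDist z 0 + 1 := by
  rw [wt_filter, wt_filter]
  have key : ({k | (z + Pi.single i 1 : Fin n → ZMod 2) k ≠ 0} : Finset (Fin n))
      = insert i ({k | z k ≠ 0} : Finset (Fin n)) := by
    ext k
    simp only [mem_filter, mem_univ, true_and, mem_insert, Pi.add_apply, Pi.single_apply]
    by_cases hki : k = i
    · subst hki; simp [h]
    · simp [hki]
  rw [key, Finset.card_insert_of_notMem (by simp [h])]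

lemma hd_compl_left (x y : Fin n → ZMod 2) :
    hammingDist (1 + x) y + hammingDist x y = n := by
  unfold hammingDist
  have h1 : (Finset.univ.filter fun i => (1 + x) i ≠ y i)
      = Finset.univ.filter fun i => ¬ (x i ≠ y i) := by
    apply Finset.filter_congr
    intro i _
    have : ∀ a b : ZMod 2, (1 + a ≠ b ↔ ¬ (a ≠ b)) := by decide
    simpa using this (x i) (y i)
  rw [h1]
  rw [add_comm]
  rw [Finset.card_filter_add_card_filter_not]
  · simp

lemma FQ_adj (x y : Fin n → ZMod 2) :
    (FQ n).Adj x y ↔ x ≠ y ∧ (hammingDist x y = 1 ∨ hammingDist x y = n) := by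
  unfold FQ
  rw [SimpleGraph.fromRel_adj]
  constructor
  · rintro ⟨hne, h | h⟩
    · exact ⟨hne, h⟩
    · rw [hammingDist_comm]; exact ⟨hne, h⟩
  · rintro ⟨hne, h⟩
    exact ⟨hne, Or.inl h⟩

def mkIso (e : (Fin n → ZMod 2) ≃ (Fin n → ZMod 2))
    (h : ∀ x y, (hammingDist (e x) (e y) = 1 ∨ hammingDist (e x) (e y) = n) ↔
      (hammingDist x y = 1 ∨ hammingDist x y = n)) : FQ n ≃g FQ n :=
  { e with
    map_rel_iff' := by
      intro x y
      show (FQ n).Adj (e x) (e y) ↔ (FQ n).Adj x y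
      rw [FQ_adj, FQ_adj]
      rw [h x y, e.injective.ne_iff] }

lemma mkIso_apply (e) (h) (v : Fin n → ZMod 2) : (mkIso e h) v = e v := rfl

/-- conjugation of an involution by translation -/
lemma conj_involutive (g : (Fin n → ZMod 2) → (Fin n → ZMod 2)) (hg : Function.Involutive g)
    (v0 : Fin n → ZMod 2) : Function.Involutive (fun x => g (x + v0) + v0) := by
  intro x
  simp only
  rw [add_assoc, vadd_self v0, add_zero, hg, add_assoc, vadd_self v0, add_zero]
/-- coordinate swap map -/
def swMap (i j : Fin n) (x : Fin n → ZMod 2) : Fin n → ZMod 2 := x ∘ (Equiv.swap i j)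

lemma swMap_involutive (i j : Fin n) : Function.Involutive (swMap i j) := by
  intro x
  funext k
  simp [swMap, Equiv.swap_apply_self]

lemma swMap_dist (i j : Fin n) (x y : Fin n → ZMod 2) :
    hammingDist (swMap i j x) (swMap i j y) = hammingDist x y :=
  hd_comp_equiv (Equiv.swap i j) x y

/-- transvection: e_i ↔ all-ones -/
def tMap (i : Fin n) (x : Fin n → ZMod 2) : Fin n → ZMod 2 :=
  fun j => if j = i then x i else x j + x i

lemma tMap_involutive (i : Fin n) : Function.Involutive (tMap i) := by
  intro x
  funext j
  by_cases hj : j = i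
  · subst hj; simp [tMap]
  · simp only [tMap, if_neg hj, if_pos rfl]
    rw [add_assoc]
    have h2 : ∀ a b : ZMod 2, a + (b + b) = a := by decide
    simp only [ite_true, if_pos rfl]
    rw [h2]

lemma tMap_fix {i : Fin n} {x : Fin n → ZMod 2} (h : x i = 0) : tMap i x = x := by
  funext j
  by_cases hj : j = i
  · subst hj; simp [tMap]
  · simp [tMap, hj, h]

lemma tMap_dist_eq {i : Fin n} {x y : Fin n → ZMod 2} (h : x i = y i) :
    hammingDist (tMap i x) (tMap i y) = hammingDist x y := by
  unfold hammingDist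
  congr 1
  apply Finset.filter_congr
  intro k _
  by_cases hk : k = i
  · subst hk; simp [tMap, h]
  · simp only [tMap, if_neg hk, h, ne_eq, add_left_inj]

lemma tMap_dist_compl {i : Fin n} {x y : Fin n → ZMod 2} (h : x i ≠ y i) :
    hammingDist (tMap i x) (tMap i y) + hammingDist x y = n + 1 := by
  unfold hammingDist
  have hxy : x i = y i + 1 := by
    have : ∀ a b : ZMod 2, a ≠ b → a = b + 1 := by decide
    exact this _ _ h
  have key : (Finset.univ.filter fun k => tMap i x k ≠ tMap i y k)
      = insert i (Finset.univ.filter fun k => ¬ (x k ≠ y k)) := by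
    ext k
    simp only [mem_filter, mem_univ, true_and, mem_insert]
    by_cases hk : k = i
    · subst hk; simp [tMap, h]
    · simp only [tMap, if_neg hk, hxy]
      have : ∀ a b c : ZMod 2, (a + (b + 1) ≠ c + b) ↔ ¬ (a ≠ c) := by decide
      rw [this (x k) (y i) (y k)]
      simp [hk]
  rw [key]
  have hnm : i ∉ (Finset.univ.filter fun k => ¬ (x k ≠ y k)) := by simp [h]
  rw [Finset.card_insert_of_notMem hnm]
  have h2 := Finset.card_filter_add_card_filter_not (s := (univ : Finset (Fin n)))
    (p := fun k => x k ≠ y k)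
  simp only [card_univ, Fintype.card_fin] at h2
  omega

lemma swMap_fix {i j : Fin n} {z : Fin n → ZMod 2} (h : z i = z j) : swMap i j z = z := by
  funext k
  simp only [swMap, Function.comp_apply, Equiv.swap_apply_def]
  by_cases hki : k = i
  · subst hki; simp [h]
  · by_cases hkj : k = j
    · subst hkj; simp [hki, h]
    · simp [hki, hkj]

lemma swap_eq_left_iff {i j k : Fin n} : Equiv.swap i j k = i ↔ k = j := by
  constructor
  · intro h
    have := congrArg (Equiv.swap i j) h
    rwa [Equiv.swap_apply_self, Equiv.swap_apply_left] at this
  · rintro rfl; exact Equiv.swap_apply_right _ _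

lemma swMap_single {i j : Fin n} : swMap i j (Pi.single i 1) = Pi.single j 1 := by
  funext k
  simp only [swMap, Function.comp_apply, Pi.single_apply]
  rw [if_congr (swap_eq_left_iff) rfl rfl]

lemma tMap_single (i : Fin n) : tMap i (Pi.single i 1) = 1 := by
  funext j
  by_cases hj : j = i
  · subst hj; simp [tMap]
  · simp [tMap, hj, Pi.single_apply]

lemma swcase (hn : 4 ≤ n) {S : Set (Fin n → ZMod 2)} (hdet : IsDeterminingSet (FQ n) S)
    (v0 : Fin n → ZMod 2) {i j : Fin n} (hij : i ≠ j)
    (col : ∀ v ∈ S, (v + v0) i = (v + v0) j) : False := by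
  have hinv := conj_involutive (swMap i j) (swMap_involutive i j) v0
  set e := hinv.toPerm with he
  have he_app : ∀ x, e x = swMap i j (x + v0) + v0 := fun x => rfl
  have hdist : ∀ x y : Fin n → ZMod 2, hammingDist (e x) (e y) = hammingDist x y := by
    intro x y
    rw [he_app, he_app, hd_add_right, swMap_dist, hd_add_right]
  let φ : FQ n ≃g FQ n := mkIso e (fun x y => by rw [hdist])
  have hfix : ∀ v ∈ S, φ v = v := by
    intro v hv
    show e v = v
    rw [he_app, swMap_fix (col v hv), add_assoc, vadd_self, add_zero]
  have hall := hdet φ hfix (Pi.single i 1 + v0)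
  have hcomp : φ (Pi.single i 1 + v0) = Pi.single j 1 + v0 := by
    show e _ = _
    rw [he_app, add_assoc, vadd_self, add_zero, swMap_single]
  rw [hcomp] at hall
  have hsing : (Pi.single j 1 : Fin n → ZMod 2) = Pi.single i 1 := add_right_cancel hall
  have hc := congrFun hsing j
  rw [Pi.single_eq_same, Pi.single_apply, if_neg (fun h => hij h.symm)] at hc
  exact one_ne_zero hc

lemma tcase (hn : 4 ≤ n) {S : Set (Fin n → ZMod 2)} (hdet : IsDeterminingSet (FQ n) S)
    (v0 : Fin n → ZMod 2) (i : Fin n)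
    (col : ∀ v ∈ S, (v + v0) i = 0) : False := by
  have hinv := conj_involutive (tMap i) (tMap_involutive i) v0
  set e := hinv.toPerm with he
  have he_app : ∀ x, e x = tMap i (x + v0) + v0 := fun x => rfl
  have hdist : ∀ x y : Fin n → ZMod 2,
      (hammingDist (e x) (e y) = 1 ∨ hammingDist (e x) (e y) = n) ↔
      (hammingDist x y = 1 ∨ hammingDist x y = n) := by
    intro x y
    rw [he_app, he_app, hd_add_right]
    by_cases hc : (x + v0) i = (y + v0) i
    · rw [tMap_dist_eq hc, hd_add_right]
    · have h1 := tMap_dist_compl hc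
      rw [hd_add_right] at h1
      omega
  let φ : FQ n ≃g FQ n := mkIso e hdist
  have hfix : ∀ v ∈ S, φ v = v := by
    intro v hv
    show e v = v
    rw [he_app, tMap_fix (col v hv), add_assoc, vadd_self, add_zero]
  have hall := hdet φ hfix (Pi.single i 1 + v0)
  have hcomp : φ (Pi.single i 1 + v0) = 1 + v0 := by
    show e _ = _
    rw [he_app, add_assoc, vadd_self, add_zero, tMap_single]
  rw [hcomp] at hall
  have hone : (1 : Fin n → ZMod 2) = Pi.single i 1 := add_right_cancel hall
  haveI : Nontrivial (Fin n) := Fin.nontrivial_iff_two_le.mpr (by omega)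
  obtain ⟨j, hj⟩ := exists_ne i
  have hc := congrFun hone j
  rw [Pi.single_apply, if_neg hj] at hc
  exact one_ne_zero hc

theorem lower_bound (hn : 4 ≤ n) {S : Set (Fin n → ZMod 2)}
    (hdet : IsDeterminingSet (FQ n) S) : Nat.clog 2 (n + 1) + 1 ≤ S.ncard := by
  classical
  by_contra hcon
  push_neg at hcon
  have hr : S.ncard ≤ Nat.clog 2 (n+1) := by omega
  have hSfin : S.Finite := Set.toFinite S
  set v0 : Fin n → ZMod 2 := if h : S.Nonempty then h.choose else 0 with hv0
  set t : Finset (Fin n → ZMod 2) := (hSfin.toFinset.image (· + v0)).erase 0 with ht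
  have htcard : t.card < Nat.clog 2 (n+1) := by
    have hclogpos : 0 < Nat.clog 2 (n+1) := Nat.clog_pos one_lt_two (by omega)
    by_cases hS : S.Nonempty
    · have himg : (hSfin.toFinset.image (· + v0)).card = S.ncard := by
        rw [Finset.card_image_of_injective _ (add_left_injective v0),
          Set.ncard_eq_toFinset_card _ hSfin]
      have h0mem : (0 : Fin n → ZMod 2) ∈ hSfin.toFinset.image (· + v0) := by
        refine Finset.mem_image.mpr ⟨v0, ?_, vadd_self v0⟩
        rw [Set.Finite.mem_toFinset]
        simp only [hv0, dif_pos hS]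
        exact hS.choose_spec
      rw [ht, Finset.card_erase_of_mem h0mem, himg]
      have : 0 < S.ncard := (Set.ncard_pos hSfin).mpr hS
      omega
    · have hSe : S = ∅ := Set.not_nonempty_iff_eq_empty.mp hS
      have : hSfin.toFinset = ∅ := by
        rw [Set.Finite.toFinset_eq_empty]
        exact hSe
      rw [ht, this]
      simpa using hclogpos
  let f : Fin (n+1) → (↥t → ZMod 2) :=
    fun p s => if h : (p : ℕ) < n then s.1 ⟨(p:ℕ), h⟩ else 0
  have hcardlt : Fintype.card (↥t → ZMod 2) < Fintype.card (Fin (n+1)) := by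
    rw [Fintype.card_fun, Fintype.card_coe, Fintype.card_fin, ZMod.card 2]
    exact Nat.pow_lt_of_lt_clog htcard
  obtain ⟨p, q, hpq, hf⟩ := Fintype.exists_ne_map_eq_of_card_lt f hcardlt
  have hcol : ∀ s (hs : s ∈ t), f p ⟨s, hs⟩ = f q ⟨s, hs⟩ := fun s hs => congrFun hf ⟨s, hs⟩
  have hmemS : ∀ v ∈ S, v + v0 = 0 ∨ v + v0 ∈ t := by
    intro v hv
    by_cases h0 : v + v0 = 0
    · exact Or.inl h0
    · right
      rw [ht]
      exact Finset.mem_erase.mpr ⟨h0,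
        Finset.mem_image.mpr ⟨v, hSfin.mem_toFinset.mpr hv, rfl⟩⟩
  by_cases hp : (p:ℕ) < n <;> by_cases hq : (q:ℕ) < n
  · have hij : (⟨(p:ℕ), hp⟩ : Fin n) ≠ ⟨(q:ℕ), hq⟩ := by
      intro h
      simp only [Fin.mk.injEq] at h
      exact hpq (Fin.ext h)
    apply swcase hn hdet v0 hij
    intro v hv
    rcases hmemS v hv with h0 | hm
    · rw [h0]; rfl
    · have := hcol _ hm
      simpa only [f, dif_pos hp, dif_pos hq] using this
  · apply tcase hn hdet v0 ⟨(p:ℕ), hp⟩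
    intro v hv
    rcases hmemS v hv with h0 | hm
    · rw [h0]; rfl
    · have := hcol _ hm
      simpa only [f, dif_pos hp, dif_neg hq] using this
  · apply tcase hn hdet v0 ⟨(q:ℕ), hq⟩
    intro v hv
    rcases hmemS v hv with h0 | hm
    · rw [h0]; rfl
    · have := (hcol _ hm).symm
      simpa only [f, dif_pos hq, dif_neg hp] using this
  · exfalso
    apply hpq
    apply Fin.ext
    have h1 := p.isLt
    have h2 := q.isLt
    omega

section Upper
variable {n : ℕ}

def lift (v : Fin n → ZMod 2) : Fin (n+1) → ZMod 2 := Fin.snoc v 0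

def drp (y : Fin (n+1) → ZMod 2) : Fin n → ZMod 2 := fun i => y i.castSucc

def nrm (y : Fin (n+1) → ZMod 2) : Fin n → ZMod 2 :=
  if y (Fin.last n) = 0 then drp y else drp (1 + y)

def hat (σ : Equiv.Perm (Fin (n+1))) (v : Fin n → ZMod 2) : Fin n → ZMod 2 :=
  nrm (lift v ∘ σ.symm)

def iot (p : Fin (n+1)) : Fin n → ZMod 2 := nrm ((1 : Fin (n+1) → ZMod 2) + Pi.single p 1)

lemma drp_lift (v : Fin n → ZMod 2) : drp (lift v) = v := by
  funext i; simp [drp, lift, Fin.snoc_castSucc]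

lemma lift_last (v : Fin n → ZMod 2) : lift v (Fin.last n) = 0 := by
  simp [lift]

lemma lift_drp {y : Fin (n+1) → ZMod 2} (h : y (Fin.last n) = 0) : lift (drp y) = y := by
  funext q
  refine Fin.lastCases ?_ ?_ q
  · rw [lift_last, h]
  · intro i; simp [lift, drp]

lemma z2_not_zero {a : ZMod 2} (h : a ≠ 0) : a = 1 := by
  rcases z2_cases a with h0 | h1
  · exact absurd h0 h
  · exact h1

lemma cc2 {m : ℕ} (y : Fin m → ZMod 2) : (1 : Fin m → ZMod 2) + (1 + y) = y := by
  funext q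
  show (1 : ZMod 2) + (1 + y q) = y q
  have : ∀ a : ZMod 2, 1 + (1 + a) = a := by decide
  exact this (y q)

lemma lift_nrm (y : Fin (n+1) → ZMod 2) :
    lift (nrm y) = y ∨ lift (nrm y) = 1 + y := by
  unfold nrm
  by_cases h : y (Fin.last n) = 0
  · left; rw [if_pos h]; exact lift_drp h
  · right; rw [if_neg h]
    apply lift_drp
    show (1 : ZMod 2) + y (Fin.last n) = 0
    rw [z2_not_zero h]
    decide

lemma lift_inj {u v : Fin n → ZMod 2} (h : lift u = lift v) : u = v := by
  have := congrArg drp h; rwa [drp_lift, drp_lift] at this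

lemma hd_lift (u v : Fin n → ZMod 2) :
    hammingDist (lift u) (lift v) = hammingDist u v := by
  unfold hammingDist
  symm
  apply Finset.card_bij (fun (i : Fin n) _ => Fin.castSucc i)
  · intro a ha
    simp only [mem_filter, mem_univ, true_and] at *
    simpa [lift, Fin.snoc_castSucc] using ha
  · intro a _ b _ h; exact Fin.castSucc_injective n h
  · intro b hb
    simp only [mem_filter, mem_univ, true_and] at hb
    have hbl : b ≠ Fin.last n := by
      intro h; subst h; rw [lift_last, lift_last] at hb; exact hb rfl
    obtain ⟨i, rfl⟩ := Fin.exists_castSucc_eq.mpr hbl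
    exact ⟨i, by simpa [lift, Fin.snoc_castSucc] using hb, rfl⟩

lemma nrm_compl (y : Fin (n+1) → ZMod 2) : nrm (1 + y) = nrm y := by
  unfold nrm
  by_cases h : y (Fin.last n) = 0
  · have h1 : ¬ ((1 + y) (Fin.last n) = 0) := by
      show ¬ ((1 : ZMod 2) + y (Fin.last n) = 0)
      rw [h]; decide
    rw [if_neg h1, if_pos h, cc2]
  · have h1 : (1 + y) (Fin.last n) = 0 := by
      show (1 : ZMod 2) + y (Fin.last n) = 0
      rw [z2_not_zero h]; decide
    rw [if_pos h1, if_neg h]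

lemma hat_nrm (σ : Equiv.Perm (Fin (n+1))) (y : Fin (n+1) → ZMod 2) :
    hat σ (nrm y) = nrm (y ∘ σ.symm) := by
  unfold hat
  rcases lift_nrm y with h | h
  · rw [h]
  · rw [h]
    have h2 : ((1 : Fin (n+1) → ZMod 2) + y) ∘ σ.symm = 1 + (y ∘ σ.symm) := rfl
    rw [h2, nrm_compl]

lemma single_comp_perm (σ : Equiv.Perm (Fin (n+1))) (p : Fin (n+1)) :
    (Pi.single p 1 : Fin (n+1) → ZMod 2) ∘ σ.symm = Pi.single (σ p) 1 := by
  funext q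
  simp only [Function.comp_apply, Pi.single_apply]
  rw [if_congr (Equiv.symm_apply_eq σ) rfl rfl]

lemma hat_iot (σ : Equiv.Perm (Fin (n+1))) (p : Fin (n+1)) :
    hat σ (iot p) = iot (σ p) := by
  unfold iot
  rw [hat_nrm]
  have h1 : ((1 : Fin (n+1) → ZMod 2) + Pi.single p 1) ∘ σ.symm
      = 1 + ((Pi.single p 1 : Fin (n+1) → ZMod 2) ∘ σ.symm) := rfl
  rw [h1, single_comp_perm]

lemma iot_castSucc (i : Fin n) : iot (Fin.castSucc i) = Pi.single i 1 := by
  unfold iot nrm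
  have hne : (Fin.castSucc i) ≠ Fin.last n := (Fin.castSucc_lt_last i).ne
  have hc : ¬ ((((1 + Pi.single (Fin.castSucc i) 1) : Fin (n+1) → ZMod 2)) (Fin.last n) = 0) := by
    show ¬ ((1 : ZMod 2) + (Pi.single (Fin.castSucc i) 1 : Fin (n+1) → ZMod 2) (Fin.last n) = 0)
    rw [Pi.single_apply, if_neg (fun h => hne h.symm)]
    decide
  rw [if_neg hc, cc2]
  funext j
  show (Pi.single (Fin.castSucc i) 1 : Fin (n+1) → ZMod 2) (Fin.castSucc j)
      = (Pi.single i 1 : Fin n → ZMod 2) j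
  rw [Pi.single_apply, Pi.single_apply, if_congr Fin.castSucc_inj rfl rfl]

lemma iot_last : iot (Fin.last n) = 1 := by
  unfold iot nrm
  have hc : (((1 + Pi.single (Fin.last n) 1) : Fin (n+1) → ZMod 2)) (Fin.last n) = 0 := by
    show (1 : ZMod 2) + (Pi.single (Fin.last n) 1 : Fin (n+1) → ZMod 2) (Fin.last n) = 0
    rw [Pi.single_eq_same]; decide
  rw [if_pos hc]
  funext j
  show (1 : ZMod 2) + (Pi.single (Fin.last n) 1 : Fin (n+1) → ZMod 2) (Fin.castSucc j) = 1
  rw [Pi.single_apply, if_neg (Fin.castSucc_lt_last j).ne]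
  decide

lemma lift_zero : lift (0 : Fin n → ZMod 2) = 0 := by
  funext q
  refine Fin.lastCases ?_ ?_ q
  · rw [lift_last]; rfl
  · intro i; simp [lift]

lemma hat_zero (σ : Equiv.Perm (Fin (n+1))) : hat σ (0 : Fin n → ZMod 2) = 0 := by
  unfold hat
  rw [lift_zero]
  have h1 : (0 : Fin (n+1) → ZMod 2) ∘ σ.symm = 0 := rfl
  rw [h1]
  unfold nrm
  have h2 : (0 : Fin (n+1) → ZMod 2) (Fin.last n) = 0 := rfl
  rw [if_pos h2]
  funext i; rfl

lemma adj_zero_iff (hn : 4 ≤ n) {v : Fin n → ZMod 2} :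
    (FQ n).Adj 0 v ↔ ∃ p, v = iot p := by
  rw [FQ_adj]
  constructor
  · rintro ⟨hne, h | h⟩
    · rw [hammingDist_comm] at h
      obtain ⟨i, rfl⟩ := wt_eq_one_iff.mp h
      exact ⟨Fin.castSucc i, (iot_castSucc i).symm⟩
    · rw [hammingDist_comm] at h
      exact ⟨Fin.last n, by rw [iot_last]; exact wt_eq_n_iff.mp h⟩
  · rintro ⟨p, rfl⟩
    refine Fin.lastCases ?_ ?_ p
    · rw [iot_last]
      constructor
      · intro h
        have := congrFun h ⟨0, by omega⟩
        exact zero_ne_one this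
      · right; rw [hammingDist_comm]; exact wt_eq_n_iff.mpr rfl
    · intro i
      rw [iot_castSucc]
      constructor
      · intro h
        have := congrFun h i
        rw [Pi.single_eq_same] at this
        exact zero_ne_one this
      · left; rw [hammingDist_comm]; exact wt_single i

lemma iot_inj (hn : 4 ≤ n) : Function.Injective (iot (n := n)) := by
  intro p q h
  by_cases hp : p = Fin.last n <;> by_cases hq : q = Fin.last n
  · rw [hp, hq]
  · exfalso
    obtain ⟨j, rfl⟩ := Fin.exists_castSucc_eq.mpr hq
    rw [hp, iot_last, iot_castSucc] at h
    have := congrArg (fun z => hammingDist z (0 : Fin n → ZMod 2)) h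
    rw [wt_eq_n_iff.mpr rfl, wt_single] at this
    omega
  · exfalso
    obtain ⟨i, rfl⟩ := Fin.exists_castSucc_eq.mpr hp
    rw [hq, iot_last, iot_castSucc] at h
    have := congrArg (fun z => hammingDist z (0 : Fin n → ZMod 2)) h
    rw [wt_eq_n_iff.mpr rfl, wt_single] at this
    omega
  · obtain ⟨i, rfl⟩ := Fin.exists_castSucc_eq.mpr hp
    obtain ⟨j, rfl⟩ := Fin.exists_castSucc_eq.mpr hq
    rw [iot_castSucc, iot_castSucc] at h
    have := congrFun h i
    rw [Pi.single_eq_same, Pi.single_apply] at this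
    by_cases hij : i = j
    · rw [hij]
    · rw [if_neg hij] at this
      exact absurd this one_ne_zero

lemma exists_sigma (hn : 4 ≤ n) (φ : FQ n ≃g FQ n) (h0 : φ 0 = 0) :
    ∃ σ : Equiv.Perm (Fin (n+1)), ∀ p, φ (iot p) = iot (σ p) := by
  have hex : ∀ p, ∃ q, φ (iot p) = iot q := by
    intro p
    have h1 : (FQ n).Adj 0 (iot p) := (adj_zero_iff hn).mpr ⟨p, rfl⟩
    have h2 : (FQ n).Adj (φ 0) (φ (iot p)) := φ.map_adj_iff.mpr h1
    rw [h0] at h2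
    exact (adj_zero_iff hn).mp h2
  choose g hg using hex
  have hginj : Function.Injective g := by
    intro p q h
    apply iot_inj hn
    have h2 : φ (iot p) = φ (iot q) := by rw [hg, hg, h]
    exact φ.toEquiv.injective h2
  exact ⟨Equiv.ofBijective g (Finite.injective_iff_bijective.mp hginj), fun p => hg p⟩

lemma hd_hat (σ : Equiv.Perm (Fin (n+1))) (u v : Fin n → ZMod 2) :
    hammingDist (hat σ u) (hat σ v) = hammingDist u v ∨
    hammingDist (hat σ u) (hat σ v) + hammingDist u v = n + 1 := by
  have hxy : hammingDist (lift u ∘ σ.symm) (lift v ∘ σ.symm) = hammingDist u v := by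
    rw [hd_comp_equiv, hd_lift]
  have hEq : hammingDist (hat σ u) (hat σ v)
      = hammingDist (lift (hat σ u)) (lift (hat σ v)) := (hd_lift _ _).symm
  rcases lift_nrm (lift u ∘ σ.symm) with h1 | h1 <;>
    rcases lift_nrm (lift v ∘ σ.symm) with h2 | h2
  · left
    rw [hEq]
    show hammingDist (lift (nrm (lift u ∘ σ.symm))) (lift (nrm (lift v ∘ σ.symm))) = _
    rw [h1, h2, hxy]
  · right
    rw [hEq]
    show hammingDist (lift (nrm (lift u ∘ σ.symm))) (lift (nrm (lift v ∘ σ.symm))) + _ = _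
    rw [h1, h2]
    rw [hammingDist_comm]
    rw [← hxy]
    rw [hammingDist_comm (lift u ∘ σ.symm) (lift v ∘ σ.symm)]
    exact hd_compl_left _ _
  · right
    rw [hEq]
    show hammingDist (lift (nrm (lift u ∘ σ.symm))) (lift (nrm (lift v ∘ σ.symm))) + _ = _
    rw [h1, h2]
    rw [← hxy]
    exact hd_compl_left _ _
  · left
    rw [hEq]
    show hammingDist (lift (nrm (lift u ∘ σ.symm))) (lift (nrm (lift v ∘ σ.symm))) = _
    rw [h1, h2, ← hxy]
    have := hd_add_right (lift u ∘ σ.symm) (lift v ∘ σ.symm) 1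
    rw [add_comm (lift u ∘ σ.symm) 1, add_comm (lift v ∘ σ.symm) 1] at this
    exact this

lemma adj_dist (x y : Fin n → ZMod 2) :
    (FQ n).Adj x y ↔
      (hammingDist x y ≠ 0 ∧ (hammingDist x y = 1 ∨ hammingDist x y = n)) := by
  rw [FQ_adj, ← hammingDist_ne_zero]

lemma hat_adj (hn : 4 ≤ n) (σ : Equiv.Perm (Fin (n+1))) {u v : Fin n → ZMod 2} :
    (FQ n).Adj (hat σ u) (hat σ v) ↔ (FQ n).Adj u v := by
  rw [adj_dist, adj_dist]
  rcases hd_hat σ u v with h | h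
  · rw [h]
  · omega

lemma hat_inj (σ : Equiv.Perm (Fin (n+1))) {u v : Fin n → ZMod 2}
    (h : hat σ u = hat σ v) : u = v := by
  have hl : lift (nrm (lift u ∘ σ.symm)) = lift (nrm (lift v ∘ σ.symm)) := congrArg lift h
  have hnc : ∀ w z : Fin n → ZMod 2, lift w ∘ σ.symm ≠ 1 + (lift z ∘ σ.symm) := by
    intro w z hc
    have h2 : lift w = 1 + lift z := by
      funext q
      have h5 := congrFun hc (σ q)
      simp only [Function.comp_apply, Equiv.symm_apply_apply, Pi.add_apply, Pi.one_apply] at h5 ⊢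
      exact h5
    have h6 := congrFun h2 (Fin.last n)
    rw [lift_last] at h6
    have h3 : ((1 + lift z : Fin (n+1) → ZMod 2)) (Fin.last n) = 1 := by
      show (1:ZMod 2) + lift z (Fin.last n) = 1
      rw [lift_last]; decide
    rw [h3] at h6
    exact zero_ne_one h6
  have hcan : ∀ x y : Fin (n+1) → ZMod 2, (1:Fin (n+1) → ZMod 2) + x = 1 + y → x = y := by
    intro x y hxy
    have h7 := congrArg (fun z => (1:Fin (n+1) → ZMod 2) + z) hxy
    rw [cc2, cc2] at h7
    exact h7
  have hcore : lift u ∘ σ.symm = lift v ∘ σ.symm := by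
    rcases lift_nrm (lift u ∘ σ.symm) with h1 | h1 <;>
      rcases lift_nrm (lift v ∘ σ.symm) with h2 | h2 <;> rw [h1, h2] at hl
    · exact hl
    · exact absurd hl (hnc u v)
    · exact absurd hl.symm (hnc v u)
    · exact hcan _ _ hl
  apply lift_inj
  funext q
  have h8 := congrFun hcore (σ q)
  simpa using h8

lemma addc (x y : Fin n → ZMod 2) : (x + y) + x = y := by
  rw [add_comm x y, add_assoc, vadd_self, add_zero]

lemma dist_one_iff {x a : Fin n → ZMod 2} :
    hammingDist x a = 1 ↔ ∃ s, x = a + Pi.single s 1 := by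
  rw [hd_eq_wt, wt_eq_one_iff]
  constructor
  · rintro ⟨s, hs⟩
    refine ⟨s, ?_⟩
    have := congrArg (fun z => a + z) hs
    rw [add_comm x a, vadd_cancel] at this
    exact this
  · rintro ⟨s, rfl⟩
    exact ⟨s, addc a (Pi.single s 1)⟩

lemma cn2 (hn : 4 ≤ n) {a b x1 x2 x3 : Fin n → ZMod 2}
    (hab : hammingDist a b = 2 ∨ hammingDist a b + 2 = n + 1)
    (h1a : (FQ n).Adj x1 a) (h1b : (FQ n).Adj x1 b)
    (h2a : (FQ n).Adj x2 a) (h2b : (FQ n).Adj x2 b)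
    (h3a : (FQ n).Adj x3 a) (h3b : (FQ n).Adj x3 b) :
    x1 = x2 ∨ x1 = x3 ∨ x2 = x3 := by
  rcases hab with hab | hab
  · have key : ∀ x, (FQ n).Adj x a → (FQ n).Adj x b →
        ∃ s, (a + b) s ≠ 0 ∧ x = a + Pi.single s 1 := by
      intro x hxa hxb
      rw [FQ_adj] at hxa hxb
      rcases hxa.2 with h1 | h1
      · rcases hxb.2 with h2 | h2
        · obtain ⟨s, rfl⟩ := dist_one_iff.mp h1
          refine ⟨s, ?_, rfl⟩
          intro hzero
          have harr : a + Pi.single s 1 + b = (a + b) + Pi.single s 1 := by abel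
          have hd3 : hammingDist (a + Pi.single s 1) b = hammingDist (a+b) 0 + 1 := by
            rw [hd_eq_wt, harr, wt_add_single_notmem hzero]
          rw [h2] at hd3
          rw [← hd_eq_wt, hab] at hd3
          omega
        · exfalso
          have hx := hd_eq_n_iff.mp h2
          subst hx
          have hsum := hd_compl_left b a
          rw [h1, hammingDist_comm b a, hab] at hsum
          omega
      · exfalso
        have hx := hd_eq_n_iff.mp h1
        subst hx
        have hsum := hd_compl_left a b
        rcases hxb.2 with h2 | h2
        · rw [h2, hab] at hsum; omega
        · rw [h2, hab] at hsum; omega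
    obtain ⟨s1, hs1, he1⟩ := key x1 h1a h1b
    obtain ⟨s2, hs2, he2⟩ := key x2 h2a h2b
    obtain ⟨s3, hs3, he3⟩ := key x3 h3a h3b
    have hcard : ({k | (a+b) k ≠ 0} : Finset (Fin n)).card = 2 := by
      rw [← wt_filter, ← hd_eq_wt, hab]
    obtain ⟨p, q, hpq, hset⟩ := Finset.card_eq_two.mp hcard
    have hm : ∀ s, (a+b) s ≠ 0 → s = p ∨ s = q := by
      intro s hs
      have hmem : s ∈ ({k | (a+b) k ≠ 0} : Finset (Fin n)) := by
        simp only [mem_filter, mem_univ, true_and]; exact hs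
      rw [hset] at hmem
      simpa using hmem
    have hss : s1 = s2 ∨ s1 = s3 ∨ s2 = s3 := by
      rcases hm s1 hs1 with h1'|h1' <;> rcases hm s2 hs2 with h2'|h2' <;>
        rcases hm s3 hs3 with h3'|h3' <;> simp [h1', h2', h3']
    rcases hss with h | h | h
    · left; rw [he1, he2, h]
    · right; left; rw [he1, he3, h]
    · right; right; rw [he2, he3, h]
  · have key : ∀ x, (FQ n).Adj x a → (FQ n).Adj x b → x = 1 + a ∨ x = 1 + b := by
      intro x hxa hxb
      rw [FQ_adj] at hxa hxb
      rcases hxa.2 with h1 | h1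
      · rcases hxb.2 with h2 | h2
        · exfalso
          have htri := hammingDist_triangle a x b
          rw [hammingDist_comm a x, h1, h2] at htri
          omega
        · right; exact hd_eq_n_iff.mp h2
      · left; exact hd_eq_n_iff.mp h1
    rcases key x1 h1a h1b with h|h <;> rcases key x2 h2a h2b with h'|h' <;>
      rcases key x3 h3a h3b with h''|h'' <;> simp [h, h', h'']

lemma phi_eq_hat (hn : 4 ≤ n) (φ : FQ n ≃g FQ n) (σ : Equiv.Perm (Fin (n+1)))
    (hσ : ∀ p, φ (iot p) = iot (σ p)) (h0 : φ 0 = 0) :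
    ∀ v, φ v = hat σ v := by
  suffices H : ∀ k v, hammingDist v 0 = k → φ v = hat σ v by
    intro v; exact H _ v rfl
  intro k
  induction k using Nat.strong_induction_on with
  | _ k ih =>
  intro v hv
  match k, hv with
  | 0, hv =>
    have : v = 0 := eq_of_hammingDist_eq_zero hv
    rw [this, h0, hat_zero]
  | 1, hv =>
    obtain ⟨i, rfl⟩ := wt_eq_one_iff.mp hv
    rw [← iot_castSucc i, hσ, hat_iot]
  | (k+2), hv =>
    have hcard : 1 < ({t | v t ≠ 0} : Finset (Fin n)).card := by
      rw [← wt_filter, hv]; omega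
    obtain ⟨i, hi, j, hj, hij⟩ := Finset.one_lt_card.mp hcard
    simp only [mem_filter, mem_univ, true_and] at hi hj
    set a := v + Pi.single i 1 with ha
    set b := v + Pi.single j 1 with hb
    set w := v + Pi.single i 1 + Pi.single j 1 with hw
    have hwa : hammingDist a 0 + 1 = k + 2 := by rw [← hv, ha]; exact wt_add_single_mem hi
    have hwb : hammingDist b 0 + 1 = k + 2 := by rw [← hv, hb]; exact wt_add_single_mem hj
    have haj : a j ≠ 0 := by
      have h5 : a j = v j := by
        rw [ha, Pi.add_apply, Pi.single_apply, if_neg (show ¬ j = i from fun h => hij h.symm),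
          add_zero]
      rw [h5]; exact hj
    have hww : hammingDist w 0 + 1 = hammingDist a 0 := wt_add_single_mem haj
    have hIa : φ a = hat σ a := ih (k+1) (by omega) a (by omega)
    have hIb : φ b = hat σ b := ih (k+1) (by omega) b (by omega)
    have hIw : φ w = hat σ w := ih k (by omega) w (by omega)
    have hd_va : hammingDist v a = 1 := by
      rw [hd_eq_wt, ha, vadd_cancel, wt_single]
    have hd_vb : hammingDist v b = 1 := by
      rw [hd_eq_wt, hb, vadd_cancel, wt_single]
    have hw' : w = a + Pi.single j 1 := by rw [hw, ha]
    have hw'' : w = b + Pi.single i 1 := by rw [hw, hb]; abel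
    have hd_wa : hammingDist w a = 1 := by
      rw [hd_eq_wt, hw', addc, wt_single]
    have hd_wb : hammingDist w b = 1 := by
      rw [hd_eq_wt, hw'', addc, wt_single]
    have hdab : hammingDist a b = 2 := by
      rw [hd_eq_wt]
      have h2 : a + b = v + (v + (Pi.single i 1 + Pi.single j 1)) := by rw [ha, hb]; abel
      rw [h2, vadd_cancel, wt_single_add_single hij]
    have hDab : hammingDist (hat σ a) (hat σ b) = 2 ∨
        hammingDist (hat σ a) (hat σ b) + 2 = n + 1 := by
      rcases hd_hat σ a b with h | h
      · left; rw [h, hdab]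
      · right; rw [hdab] at h; exact h
    have hvw : v ≠ w := by
      have h2 : hammingDist v w = 2 := by
        rw [hd_eq_wt]
        have h3 : v + w = Pi.single i 1 + Pi.single j 1 := by
          rw [hw]
          have h4 : v + Pi.single i 1 + Pi.single j 1
              = v + (Pi.single i 1 + Pi.single j 1) := by abel
          rw [h4, vadd_cancel]
        rw [h3, wt_single_add_single hij]
      intro hc
      rw [hc, hammingDist_self] at h2
      omega
    have adj_va : (FQ n).Adj v a :=
      (adj_dist _ _).mpr ⟨by omega, Or.inl hd_va⟩
    have adj_vb : (FQ n).Adj v b :=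
      (adj_dist _ _).mpr ⟨by omega, Or.inl hd_vb⟩
    have adj_wa : (FQ n).Adj w a :=
      (adj_dist _ _).mpr ⟨by omega, Or.inl hd_wa⟩
    have adj_wb : (FQ n).Adj w b :=
      (adj_dist _ _).mpr ⟨by omega, Or.inl hd_wb⟩
    have h1a : (FQ n).Adj (φ v) (hat σ a) := by
      rw [← hIa]; exact φ.map_adj_iff.mpr adj_va
    have h1b : (FQ n).Adj (φ v) (hat σ b) := by
      rw [← hIb]; exact φ.map_adj_iff.mpr adj_vb
    have h2a : (FQ n).Adj (hat σ v) (hat σ a) := (hat_adj hn σ).mpr adj_va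
    have h2b : (FQ n).Adj (hat σ v) (hat σ b) := (hat_adj hn σ).mpr adj_vb
    have h3a : (FQ n).Adj (hat σ w) (hat σ a) := (hat_adj hn σ).mpr adj_wa
    have h3b : (FQ n).Adj (hat σ w) (hat σ b) := (hat_adj hn σ).mpr adj_wb
    rcases cn2 hn hDab h1a h1b h2a h2b h3a h3b with h | h | h
    · exact h
    · exfalso
      rw [← hIw] at h
      exact hvw (φ.toEquiv.injective h)
    · exfalso
      exact hvw (hat_inj σ h)

lemma hat_fix_cases (σ : Equiv.Perm (Fin (n+1))) {w : Fin n → ZMod 2} (h : hat σ w = w) :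
    (∀ q, lift w (σ.symm q) = lift w q) ∨ (∀ q, lift w (σ.symm q) = 1 + lift w q) := by
  have hl : lift (nrm (lift w ∘ σ.symm)) = lift w := congrArg lift h
  rcases lift_nrm (lift w ∘ σ.symm) with h1 | h1
  · left
    intro q
    rw [h1] at hl
    exact congrFun hl q
  · right
    rw [h1] at hl
    have h2 : lift w ∘ σ.symm = 1 + lift w := by
      have h3 := congrArg (fun z => (1:Fin (n+1) → ZMod 2) + z) hl
      rw [cc2] at h3
      exact h3
    intro q
    have h4 := congrFun h2 q
    simpa using h4

def wv (n k : ℕ) : Fin n → ZMod 2 := fun i => if Nat.testBit (i : ℕ) k then 1 else 0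

lemma lift_one_apply (p : Fin (n+1)) :
    lift (1 : Fin n → ZMod 2) p = if p = Fin.last n then 0 else 1 := by
  refine Fin.lastCases ?_ ?_ p
  · rw [lift_last, if_pos rfl]
  · intro i
    rw [if_neg (Fin.castSucc_lt_last i).ne]
    simp [lift]

lemma sigma_fix (hn : 4 ≤ n) (σ : Equiv.Perm (Fin (n+1)))
    (hone : hat σ 1 = 1) (hw : ∀ k, k < Nat.clog 2 n → hat σ (wv n k) = wv n k) :
    ∀ q, σ.symm q = q := by
  have hlast : σ.symm (Fin.last n) = Fin.last n := by
    rcases hat_fix_cases σ hone with hA | hB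
    · have h2 := hA (Fin.last n)
      rw [lift_one_apply, lift_one_apply, if_pos rfl] at h2
      by_contra hne
      rw [if_neg hne] at h2
      exact one_ne_zero h2
    · exfalso
      have key : ∀ i : Fin n, σ.symm (Fin.castSucc i) = Fin.last n := by
        intro i
        have h2 := hB (Fin.castSucc i)
        rw [lift_one_apply, lift_one_apply, if_neg (Fin.castSucc_lt_last i).ne] at h2
        have h3 : (1 : ZMod 2) + 1 = 0 := by decide
        rw [h3] at h2
        by_contra hne
        rw [if_neg hne] at h2
        exact one_ne_zero h2
      have h0 := key ⟨0, by omega⟩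
      have h1 := key ⟨1, by omega⟩
      have := σ.symm.injective (h0.trans h1.symm)
      have hc : (0 : ℕ) = 1 := by
        have := congrArg Fin.val (Fin.castSucc_injective n this)
        simpa using this
      omega
  have hwA : ∀ k, k < Nat.clog 2 n →
      ∀ q, lift (wv n k) (σ.symm q) = lift (wv n k) q := by
    intro k hk
    rcases hat_fix_cases σ (hw k hk) with hA | hB
    · exact hA
    · exfalso
      have h2 := hB (Fin.last n)
      rw [hlast, lift_last] at h2
      exact absurd h2 (by decide)
  intro q
  by_cases hq : q = Fin.last n
  · rw [hq, hlast]
  · obtain ⟨i, rfl⟩ := Fin.exists_castSucc_eq.mpr hq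
    have hsne : σ.symm (Fin.castSucc i) ≠ Fin.last n := by
      intro hc
      have := σ.symm.injective (hc.trans hlast.symm)
      exact hq (by rw [← this])
    obtain ⟨i', hi'⟩ := Fin.exists_castSucc_eq.mpr hsne
    have hbit : ∀ k, Nat.testBit (i' : ℕ) k = Nat.testBit (i : ℕ) k := by
      intro k
      by_cases hk : k < Nat.clog 2 n
      · have h2 := hwA k hk (Fin.castSucc i)
        rw [← hi'] at h2
        have hl1 : lift (wv n k) (Fin.castSucc i') = wv n k i' := by simp [lift]
        have hl2 : lift (wv n k) (Fin.castSucc i) = wv n k i := by simp [lift]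
        rw [hl1, hl2] at h2
        unfold wv at h2
        by_cases b1 : Nat.testBit (i' : ℕ) k <;> by_cases b2 : Nat.testBit (i : ℕ) k
        · rw [b1, b2]
        · rw [if_pos b1, if_neg b2] at h2; exact absurd h2 one_ne_zero
        · rw [if_neg b1, if_pos b2] at h2; exact absurd h2 zero_ne_one
        · simp [b1, b2]
      · push_neg at hk
        have hle : n ≤ 2 ^ k := le_trans (Nat.le_pow_clog one_lt_two n)
          (Nat.pow_le_pow_right (by omega) hk)
        rw [Nat.testBit_lt_two_pow (lt_of_lt_of_le i'.isLt hle),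
          Nat.testBit_lt_two_pow (lt_of_lt_of_le i.isLt hle)]
    have : (i' : ℕ) = (i : ℕ) := Nat.eq_of_testBit_eq hbit
    rw [← hi']
    congr 1
    exact Fin.ext this

lemma upper_det (hn : 4 ≤ n) :
    IsDeterminingSet (FQ n)
      (insert 0 (insert 1 (Set.range (fun k : Fin (Nat.clog 2 n) => wv n (k : ℕ))))) := by
  intro φ hfix v
  have h0 : φ 0 = 0 := hfix 0 (Set.mem_insert _ _)
  have h1 : φ 1 = 1 := hfix 1 (Set.mem_insert_of_mem _ (Set.mem_insert _ _))
  obtain ⟨σ, hσ⟩ := exists_sigma hn φ h0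
  have hhat := phi_eq_hat hn φ σ hσ h0
  have hsym : ∀ q, σ.symm q = q := by
    apply sigma_fix hn σ
    · rw [← hhat 1]; exact h1
    · intro k hk
      rw [← hhat (wv n k)]
      apply hfix
      exact Set.mem_insert_of_mem _ (Set.mem_insert_of_mem _ ⟨⟨k, hk⟩, rfl⟩)
  have hid : hat σ v = v := by
    unfold hat
    have hcomp : lift v ∘ σ.symm = lift v := by
      funext q
      show lift v (σ.symm q) = lift v q
      rw [hsym q]
    rw [hcomp]
    unfold nrm
    rw [if_pos (lift_last v)]
    exact drp_lift v
  rw [hhat v, hid]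

lemma upper_card :
    (insert (0 : Fin n → ZMod 2)
      (insert 1 (Set.range (fun k : Fin (Nat.clog 2 n) => wv n (k : ℕ))))).ncard
      ≤ Nat.clog 2 n + 2 := by
  classical
  have h1 : (Set.range (fun k : Fin (Nat.clog 2 n) => wv n (k : ℕ))).ncard
      ≤ Nat.clog 2 n := by
    have h2 : Set.range (fun k : Fin (Nat.clog 2 n) => wv n (k : ℕ))
        = ↑(Finset.image (fun k : Fin (Nat.clog 2 n) => wv n (k : ℕ)) Finset.univ) := by
      rw [Finset.coe_image, Finset.coe_univ, Set.image_univ]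
    rw [h2, Set.ncard_coe_finset]
    calc (Finset.image (fun k : Fin (Nat.clog 2 n) => wv n (k : ℕ)) Finset.univ).card
        ≤ (Finset.univ : Finset (Fin (Nat.clog 2 n))).card := Finset.card_image_le
      _ = Nat.clog 2 n := by rw [Finset.card_univ, Fintype.card_fin]
  have h3 := Set.ncard_insert_le (1 : Fin n → ZMod 2)
    (Set.range (fun k : Fin (Nat.clog 2 n) => wv n (k : ℕ)))
  have h4 := Set.ncard_insert_le (0 : Fin n → ZMod 2)
    (insert 1 (Set.range (fun k : Fin (Nat.clog 2 n) => wv n (k : ℕ))))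
  omega

end Upper

end Infra

/-- For `n ≥ 4`, `⌈lg(n+1)⌉ + 1 ≤ det(FQ_n) ≤ ⌈lg n⌉ + 2`. -/
theorem stmt11 (n : ℕ) (hn : 4 ≤ n) :
    Nat.clog 2 (n + 1) + 1 ≤ detNum (FQ n) ∧
      detNum (FQ n) ≤ Nat.clog 2 n + 2 := by
  constructor
  · refine le_csInf ⟨Set.univ.ncard, Set.univ, rfl, fun φ h v => h v trivial⟩ ?_
    rintro r ⟨S, rfl, hdet⟩
    exact lower_bound hn hdet
  · calc detNum (FQ n) ≤ (insert 0 (insert 1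
        (Set.range (fun k : Fin (Nat.clog 2 n) => wv n (k : ℕ))))).ncard :=
          Nat.sInf_le ⟨_, rfl, upper_det hn⟩
      _ ≤ Nat.clog 2 n + 2 := upper_card
end

section
/- For n ∈ {2^m − 1, 2^m − 3} with m ≥ 3, the determining number of the folded hypercube FQ_n equals ⌈lg n⌉ + 2. -/
namespace FQaux

abbrev Vn (n : ℕ) := Fin n → ZMod 2

lemma z2 : ∀ a : ZMod 2, a + a = 0 := by decide
lemma z01 : ∀ a : ZMod 2, a = 0 ∨ a = 1 := by decide
lemma zadd : ∀ a b c d : ZMod 2, a + b = c + d → a = c + (d + b) := by decide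
lemma zc : ∀ a b : ZMod 2, a = b + (b + a) := by decide

variable {n : ℕ}

def lft (x : Vn n) : Vn (n+1) := fun j => Fin.lastCases 0 x j
def prj (y : Vn (n+1)) : Vn n := fun j => y j.castSucc + y (Fin.last n)
def pbit (k : Fin (n+1)) : Vn (n+1) := fun j => if j = k then 1 else 0
def iv (k : Fin (n+1)) : Vn n := prj (pbit k)
def pmap (σ : Equiv.Perm (Fin (n+1))) (y : Vn (n+1)) : Vn (n+1) := fun j => y (σ.symm j)
def amap (σ : Equiv.Perm (Fin (n+1))) (x : Vn n) : Vn n := prj (pmap σ (lft x))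
def cst (c : ZMod 2) : Vn (n+1) := fun _ => c

@[simp] lemma lft_castSucc (x : Vn n) (i : Fin n) : lft x i.castSucc = x i := by
  simp [lft]
@[simp] lemma lft_last (x : Vn n) : lft x (Fin.last n) = 0 := by simp [lft]
@[simp] lemma prj_lft (x : Vn n) : prj (lft x) = x := by
  funext j; simp [prj]
lemma lft_add (x y : Vn n) : lft (x + y) = lft x + lft y := by
  funext j
  cases j using Fin.lastCases with
  | last => simp
  | cast i => simp
@[simp] lemma lft_zero : lft (0 : Vn n) = 0 := by
  funext j; cases j using Fin.lastCases <;> simp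
lemma prj_add (y z : Vn (n+1)) : prj (y + z) = prj y + prj z := by
  funext j; simp [prj]; ring
@[simp] lemma prj_cst (c : ZMod 2) : prj (cst c : Vn (n+1)) = 0 := by
  funext j; simp [prj, cst, z2]
lemma prj_add_cst (y : Vn (n+1)) (c : ZMod 2) : prj (y + cst c) = prj y := by
  rw [prj_add, prj_cst, add_zero]

lemma prj_eq_prj {y z : Vn (n+1)} (h : prj y = prj z) :
    y = z ∨ y = z + cst 1 := by
  have key : y = z + cst (z (Fin.last n) + y (Fin.last n)) := by
    funext j
    cases j using Fin.lastCases with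
    | last => simpa [cst] using zc (y (Fin.last n)) (z (Fin.last n))
    | cast i =>
        have h2 := congrFun h i
        simp only [prj] at h2
        simpa [cst] using zadd _ _ _ _ h2
  rcases z01 (z (Fin.last n) + y (Fin.last n)) with h0 | h1
  · left; rw [key, h0]; funext j; simp [cst]
  · right; rw [key, h1]

lemma pmap_pbit (σ : Equiv.Perm (Fin (n+1))) (k : Fin (n+1)) :
    pmap σ (pbit k) = pbit (σ k) := by
  funext j
  simp only [pmap, pbit]
  by_cases hj : j = σ k
  · simp [hj]
  · have : σ.symm j ≠ k := fun hc => hj (by rw [← hc]; simp)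
    simp [hj, this]
lemma pmap_add (σ : Equiv.Perm (Fin (n+1))) (y z : Vn (n+1)) :
    pmap σ (y + z) = pmap σ y + pmap σ z := rfl
@[simp] lemma pmap_cst (σ : Equiv.Perm (Fin (n+1))) (c : ZMod 2) :
    pmap σ (cst c) = cst c := rfl
@[simp] lemma pmap_zero (σ : Equiv.Perm (Fin (n+1))) : pmap σ (0 : Vn (n+1)) = 0 := rfl
lemma pmap_pmap (σ τ : Equiv.Perm (Fin (n+1))) (y : Vn (n+1)) :
    pmap σ (pmap τ y) = pmap (σ * τ) y := rfl
@[simp] lemma pmap_one (y : Vn (n+1)) : pmap 1 y = y := rfl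

lemma lft_prj (y : Vn (n+1)) : lft (prj y) = y + cst (y (Fin.last n)) := by
  funext j
  cases j using Fin.lastCases with
  | last => simp [cst, z2]
  | cast i => simp [prj, cst]

lemma amap_iv (σ : Equiv.Perm (Fin (n+1))) (k : Fin (n+1)) :
    amap σ (iv k) = iv (σ k) := by
  unfold amap iv
  rw [lft_prj, pmap_add, pmap_pbit, pmap_cst, prj_add_cst]

lemma amap_amap (σ τ : Equiv.Perm (Fin (n+1))) (x : Vn n) :
    amap σ (amap τ x) = amap (σ * τ) x := by
  unfold amap
  rw [lft_prj, pmap_add, pmap_cst, prj_add_cst, pmap_pmap]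

@[simp] lemma amap_one (x : Vn n) : amap 1 x = x := by
  unfold amap; rw [pmap_one, prj_lft]

lemma amap_add (σ : Equiv.Perm (Fin (n+1))) (x y : Vn n) :
    amap σ (x + y) = amap σ x + amap σ y := by
  unfold amap
  rw [lft_add, pmap_add, prj_add]

@[simp] lemma amap_zero (σ : Equiv.Perm (Fin (n+1))) : amap σ (0 : Vn n) = 0 := by
  unfold amap; rw [lft_zero, pmap_zero]; funext j; simp [prj]

lemma amap_fix_iff (σ : Equiv.Perm (Fin (n+1))) (x : Vn n) :
    amap σ x = x ↔ (pmap σ (lft x) = lft x ∨ pmap σ (lft x) = lft x + cst 1) := by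
  constructor
  · intro h
    refine prj_eq_prj ?_
    rw [prj_lft]; exact h
  · rintro (h | h) <;> unfold amap <;> rw [h]
    · exact prj_lft x
    · rw [prj_add_cst, prj_lft]

lemma iv_castSucc (i : Fin n) : iv (i.castSucc) = fun j => if j = i then 1 else 0 := by
  funext j
  simp only [iv, prj, pbit]
  rw [if_neg (Fin.castSucc_lt_last i).ne', add_zero]
  by_cases h : j = i
  · simp [h]
  · rw [if_neg h, if_neg (by simpa [Fin.castSucc_inj] using h)]

lemma iv_last : iv (Fin.last n) = fun _ => (1 : ZMod 2) := by
  funext j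
  simp only [iv, prj, pbit]
  rw [if_neg (Fin.castSucc_lt_last j).ne]
  simp

lemma exists_third (hn : 2 ≤ n) (k k' : Fin (n+1)) : ∃ j, j ≠ k ∧ j ≠ k' := by
  by_contra hc
  push_neg at hc
  have hsub : (Finset.univ : Finset (Fin (n+1))) ⊆ {k, k'} := by
    intro j _
    rcases Classical.em (j = k) with h | h
    · simp [h]
    · simp [hc j h]
  have := Finset.card_le_card hsub
  simp only [Finset.card_univ, Fintype.card_fin] at this
  have h2 : ({k, k'} : Finset (Fin (n+1))).card ≤ 2 := by
    apply le_trans (Finset.card_insert_le _ _)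
    simp
  omega

lemma iv_injective (hn : 2 ≤ n) : Function.Injective (iv (n := n)) := by
  intro k k' h
  rcases prj_eq_prj (h : prj (pbit k) = prj (pbit k')) with h1 | h1
  · by_contra hc
    have h2 := congrFun h1 k
    simp only [pbit, if_pos rfl, if_neg hc] at h2
    exact one_ne_zero h2
  · exfalso
    obtain ⟨j, hj1, hj2⟩ := exists_third hn k k'
    have := congrFun h1 j
    simp only [pbit, cst, Pi.add_apply, if_neg hj1, if_neg hj2] at this
    exact one_ne_zero this.symm

lemma znz : ∀ a : ZMod 2, a ≠ 0 → a = 1 := by decide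
lemma zsub : ∀ a b : ZMod 2, a - b = a + b := by decide

lemma norm_single (i : Fin n) : hammingNorm (fun j => if j = i then (1:ZMod 2) else 0) = 1 := by
  have : (Finset.univ.filter fun j => (if j = i then (1:ZMod 2) else 0) ≠ 0) = {i} := by
    ext j; by_cases h : j = i <;> simp [h]
  simpa [hammingNorm] using congrArg Finset.card this

lemma norm_const1 : hammingNorm (fun _ : Fin n => (1:ZMod 2)) = n := by
  have : (Finset.univ.filter fun _ : Fin n => (1:ZMod 2) ≠ 0) = Finset.univ := by
    ext j; simp
  simp [hammingNorm, this]

lemma eq_single_of_norm_one {x : Vn n} (h : hammingNorm x = 1) :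
    ∃ i, x = fun j => if j = i then 1 else 0 := by
  obtain ⟨i, hi⟩ := Finset.card_eq_one.mp h
  refine ⟨i, funext fun j => ?_⟩
  by_cases hj : j = i
  · subst hj
    rw [if_pos rfl]
    apply znz
    have : j ∈ (Finset.univ.filter fun t => x t ≠ 0) := by rw [hi]; simp
    simpa using this
  · rw [if_neg hj]
    by_contra hc
    have : j ∈ (Finset.univ.filter fun t => x t ≠ 0) := by simp [hc]
    rw [hi] at this
    simp at this
    exact hj this

lemma eq_const_of_norm_n {x : Vn n} (h : hammingNorm x = n) :
    x = fun _ => (1 : ZMod 2) := by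
  have huniv : (Finset.univ.filter fun t => x t ≠ 0) = Finset.univ := by
    apply Finset.eq_univ_of_card
    rw [Fintype.card_fin]; exact h
  funext j
  apply znz
  have hj : j ∈ (Finset.univ.filter fun t => x t ≠ 0) := by
    rw [huniv]; exact Finset.mem_univ j
  simpa using hj

lemma inE_iff (x : Vn n) :
    (hammingNorm x = 1 ∨ hammingNorm x = n) ↔ ∃ k, x = iv k := by
  constructor
  · rintro (h | h)
    · obtain ⟨i, hi⟩ := eq_single_of_norm_one h
      exact ⟨i.castSucc, by rw [iv_castSucc]; exact hi⟩
    · exact ⟨Fin.last n, by rw [iv_last]; exact eq_const_of_norm_n h⟩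
  · rintro ⟨k, rfl⟩
    cases k using Fin.lastCases with
    | last => right; rw [iv_last]; exact norm_const1
    | cast i => left; rw [iv_castSucc]; exact norm_single i

lemma adj_iff (x y : Vn n) :
    (FQ n).Adj x y ↔ x ≠ y ∧ ∃ k, x + y = iv k := by
  have hd : ∀ a b : Vn n, hammingDist a b = hammingNorm (a + b) := by
    intro a b
    rw [hammingDist_eq_hammingNorm]
    congr 1
    funext j
    have hz : ∀ a b : ZMod 2, -a + b = a + b := by decide
    exact hz (a j) (b j)
  rw [FQ, SimpleGraph.fromRel_adj]
  constructor
  · rintro ⟨hne, h | h⟩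
    · exact ⟨hne, (inE_iff _).mp (by rwa [← hd])⟩
    · refine ⟨hne, (inE_iff _).mp ?_⟩
      rw [hd] at h
      rwa [show y + x = x + y from add_comm y x] at h
  · rintro ⟨hne, hk⟩
    exact ⟨hne, Or.inl (by rw [hd]; exact (inE_iff _).mpr hk)⟩

def sing (i : Fin n) : Vn n := fun j => if j = i then 1 else 0

lemma iv_cast' (i : Fin n) : iv (i.castSucc) = sing i := iv_castSucc i

lemma addself (x : Vn n) : x + x = 0 := funext fun j => z2 (x j)

/-- Translation automorphism. -/
def tIso (b : Vn n) : FQ n ≃g FQ n where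
  toEquiv := ⟨fun x => x + b, fun x => x + b,
    fun x => by show x + b + b = x; rw [add_assoc, addself, add_zero],
    fun x => by show x + b + b = x; rw [add_assoc, addself, add_zero]⟩
  map_rel_iff' := by
    intro x y
    simp only [Equiv.coe_fn_mk]
    rw [adj_iff, adj_iff]
    have he : x + b + (y + b) = x + y := by
      rw [add_add_add_comm, addself, add_zero]
    rw [he]
    constructor
    · rintro ⟨h1, h2⟩
      exact ⟨fun hc => h1 (by rw [hc]), h2⟩
    · rintro ⟨h1, h2⟩
      exact ⟨fun hc => h1 (by rwa [add_left_inj] at hc), h2⟩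

@[simp] lemma tIso_apply (b x : Vn n) : tIso b x = x + b := rfl

lemma amap_linv (σ : Equiv.Perm (Fin (n+1))) (x : Vn n) : amap σ⁻¹ (amap σ x) = x := by
  rw [amap_amap, inv_mul_cancel, amap_one]

lemma amap_injective (σ : Equiv.Perm (Fin (n+1))) : Function.Injective (amap (n := n) σ) := by
  intro x y h
  have := congrArg (amap σ⁻¹) h
  rwa [amap_linv, amap_linv] at this

lemma amap_E_iff (σ : Equiv.Perm (Fin (n+1))) (z : Vn n) :
    (∃ k, amap σ z = iv k) ↔ ∃ k, z = iv k := by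
  constructor
  · rintro ⟨k, hk⟩
    refine ⟨σ⁻¹ k, ?_⟩
    have := congrArg (amap σ⁻¹) hk
    rwa [amap_linv, amap_iv] at this
  · rintro ⟨k, rfl⟩
    exact ⟨σ k, amap_iv σ k⟩

/-- Linear automorphism from a permutation of the n+1 "directions". -/
def aIso (σ : Equiv.Perm (Fin (n+1))) : FQ n ≃g FQ n where
  toEquiv := ⟨amap σ, amap σ⁻¹, fun x => amap_linv σ x,
    fun x => by
      have := amap_linv σ⁻¹ x
      rwa [inv_inv] at this⟩
  map_rel_iff' := by
    intro x y
    simp only [Equiv.coe_fn_mk]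
    rw [adj_iff, adj_iff, ← amap_add, amap_E_iff]
    constructor
    · rintro ⟨h1, h2⟩
      exact ⟨fun hc => h1 (by rw [hc]), h2⟩
    · rintro ⟨h1, h2⟩
      exact ⟨fun hc => h1 (amap_injective σ hc), h2⟩

@[simp] lemma aIso_apply (σ : Equiv.Perm (Fin (n+1))) (x : Vn n) : aIso σ x = amap σ x := rfl

lemma sing_ne_zero (i : Fin n) : sing i ≠ 0 := by
  intro hc
  have := congrFun hc i
  simp [sing] at this

lemma adj_add_sing (z : Vn n) (i : Fin n) : (FQ n).Adj (z + sing i) z := by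
  rw [adj_iff]
  constructor
  · intro hc
    apply sing_ne_zero i
    funext t
    have h2 := congrFun hc t
    simp only [Pi.add_apply, Pi.zero_apply] at h2 ⊢
    have : ∀ a b : ZMod 2, a + b = a → b = 0 := by decide
    exact this _ _ h2
  · refine ⟨i.castSucc, ?_⟩
    rw [iv_cast']
    funext t
    have : ∀ a b : ZMod 2, a + b + a = b := by decide
    simpa using this (z t) (sing i t)

lemma supp_add_sing {x : Vn n} {i : Fin n} (hi : x i ≠ 0) :
    (Finset.univ.filter fun t => (x + sing i) t ≠ 0)
      = (Finset.univ.filter fun t => x t ≠ 0).erase i := by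
  ext t
  rw [Finset.mem_filter, Finset.mem_erase, Finset.mem_filter]
  by_cases ht : t = i
  · subst ht
    simp [sing, znz _ hi, z2]
  · simp [sing, ht]

lemma norm_add_sing {x : Vn n} {i : Fin n} (hi : x i ≠ 0) :
    hammingNorm (x + sing i) = hammingNorm x - 1 := by
  have h1 : hammingNorm (x + sing i)
      = ((Finset.univ.filter fun t => x t ≠ 0).erase i).card := by
    simpa [hammingNorm] using congrArg Finset.card (supp_add_sing hi)
  rw [h1, Finset.card_erase_of_mem (by simp [hi])]
  rfl

lemma mem_supp_norm {x : Vn n} {i : Fin n} (hi : x i ≠ 0) : 1 ≤ hammingNorm x := by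
  have : i ∈ (Finset.univ.filter fun t => x t ≠ 0) := by simp [hi]
  have := Finset.card_pos.mpr ⟨i, this⟩
  simpa [hammingNorm] using this

lemma exists_avoid3 (hn : 4 ≤ n) (a b c : Fin n) : ∃ t, t ≠ a ∧ t ≠ b ∧ t ≠ c := by
  by_contra hc
  push_neg at hc
  have hsub : (Finset.univ : Finset (Fin n)) ⊆ {a, b, c} := by
    intro t _
    rcases Classical.em (t = a) with h | h
    · simp [h]
    · rcases Classical.em (t = b) with h2 | h2
      · simp [h2]
      · simp [hc t h h2]
  have hle := Finset.card_le_card hsub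
  simp only [Finset.card_univ, Fintype.card_fin] at hle
  have h3 : ({a, b, c} : Finset (Fin n)).card ≤ 3 := by
    apply le_trans (Finset.card_insert_le _ _)
    have := Finset.card_insert_le b ({c} : Finset (Fin n))
    simp at this ⊢
    omega
  omega

lemma sing_inj {a b : Fin n} (h : sing a = sing b) : a = b := by
  have := congrFun h a
  simp only [sing, if_pos rfl] at this
  by_contra hc
  rw [if_neg hc] at this
  exact one_ne_zero this

lemma add_solve {a v c : Vn n} (h : a + v = c) : v = a + c := by
  funext t
  have h2 := congrFun h t
  simp only [Pi.add_apply] at h2 ⊢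
  have : ∀ x y z : ZMod 2, x + y = z → y = x + z := by decide
  exact this _ _ _ h2

lemma common_nbr (hn : 4 ≤ n) {i j : Fin n} (hij : i ≠ j) (z v : Vn n)
    (h1 : (FQ n).Adj (z + sing i) v) (h2 : (FQ n).Adj (z + sing j) v) :
    v = z ∨ v = z + sing i + sing j := by
  rw [adj_iff] at h1 h2
  obtain ⟨-, k, hk⟩ := h1
  obtain ⟨-, l, hl⟩ := h2
  have hsum : iv k + iv l = sing i + sing j := by
    rw [← hk, ← hl]
    funext t
    simp only [Pi.add_apply]
    have : ∀ a b c d : ZMod 2, (a + b + c) + (a + d + c) = b + d := by decide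
    exact this (z t) (sing i t) (v t) (sing j t)
  have honeadd : ∀ (l' : Fin n), (fun _ => (1:ZMod 2)) + sing l' ≠ sing i + sing j := by
    intro l' hc
    obtain ⟨t, hta, htb, htc⟩ := exists_avoid3 hn l' i j
    have hev := congrFun hc t
    simp only [Pi.add_apply, sing] at hev
    rw [if_neg hta, if_neg htb, if_neg htc] at hev
    exact (by decide : ¬((1:ZMod 2) + 0 = 0 + 0)) hev
  cases k using Fin.lastCases with
  | last =>
      exfalso
      rw [iv_last] at hsum
      cases l using Fin.lastCases with
      | last =>
          rw [iv_last] at hsum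
          have hev := congrFun hsum i
          simp only [Pi.add_apply, sing, eq_self_iff_true, if_true] at hev
          rw [if_neg (fun hc : i = j => hij hc)] at hev
          exact (by decide : ¬((1:ZMod 2) + 1 = 1 + 0)) hev
      | cast l' =>
          rw [iv_cast'] at hsum
          exact honeadd l' hsum
  | cast k' =>
      rw [iv_cast'] at hsum hk
      cases l using Fin.lastCases with
      | last =>
          exfalso
          rw [iv_last] at hsum
          apply honeadd k'
          rw [← hsum]
          funext t
          simp only [Pi.add_apply]
          have : ∀ a b : ZMod 2, a + b = b + a := by decide
          exact this _ _
      | cast l' =>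
          rw [iv_cast'] at hsum
          have hcases : k' = i ∨ k' = j := by
            by_cases hk' : k' = i
            · exact Or.inl hk'
            · right
              have hl'i : l' = i := by
                have hev := congrFun hsum i
                simp only [Pi.add_apply, sing, eq_self_iff_true, if_true] at hev
                rw [if_neg (fun hc : i = j => hij hc),
                  if_neg (fun hc : i = k' => hk' hc.symm)] at hev
                by_contra hc
                rw [if_neg (fun h2 : i = l' => hc h2.symm)] at hev
                exact (by decide : ¬((0:ZMod 2) + 0 = 1 + 0)) hev
              subst hl'i
              have hsum2 : sing l' + sing k' = sing l' + sing j := by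
                rw [← hsum]
                funext t
                simp only [Pi.add_apply]
                have : ∀ a b : ZMod 2, a + b = b + a := by decide
                exact this _ _
              exact sing_inj (add_left_cancel hsum2)
          rcases hcases with hki | hkj
          · subst hki
            left
            rw [add_solve hk]
            funext t
            simp only [Pi.add_apply]
            have h3 : ∀ a b : ZMod 2, a + b + b = a := by decide
            exact h3 _ _
          · subst hkj
            right
            exact add_solve hk

lemma sing_apply_ne {i t : Fin n} (h : t ≠ i) : sing i t = 0 := by
  simp [sing, h]
lemma sing_apply_self (i : Fin n) : sing i i = 1 := by simp [sing]

lemma rigid (hn : 5 ≤ n) (φ : FQ n ≃g FQ n) (h0 : φ 0 = 0)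
    (hE : ∀ k, φ (iv k) = iv k) : ∀ x, φ x = x := by
  have hn4 : 4 ≤ n := by omega
  suffices key : ∀ w (y : Vn n), hammingNorm y = w → φ y = y by
    intro x; exact key _ x rfl
  intro w
  induction w using Nat.strong_induction_on with
  | _ w IH =>
  intro x hx
  rcases Nat.lt_or_ge w 2 with hw | hw
  · interval_cases w
    · rw [hammingNorm_eq_zero.mp hx]; exact h0
    · obtain ⟨i, hxi⟩ := eq_single_of_norm_one hx
      have hs : x = sing i := hxi
      rw [hs, ← iv_cast']
      exact hE i.castSucc
  · -- w ≥ 2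
    have h1w : 1 < hammingNorm x := by omega
    obtain ⟨i, hi, j, hj, hij⟩ := Finset.one_lt_card.mp
      (show 1 < (Finset.univ.filter fun t => x t ≠ 0).card from by
        simpa [hammingNorm] using h1w)
    simp only [Finset.mem_filter, Finset.mem_univ, true_and] at hi hj
    have haj : (x + sing i) j = x j := by
      simp [sing_apply_ne (fun hc : j = i => hij (hc.symm)), ]
    have na : hammingNorm (x + sing i) = w - 1 := by rw [norm_add_sing hi, hx]
    have nb : hammingNorm (x + sing j) = w - 1 := by rw [norm_add_sing hj, hx]
    have nz : hammingNorm (x + sing i + sing j) = w - 2 := by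
      rw [norm_add_sing (show (x + sing i) j ≠ 0 by rw [haj]; exact hj), na]
      omega
    have pa : φ (x + sing i) = x + sing i := IH (w-1) (by omega) _ na
    have pb : φ (x + sing j) = x + sing j := IH (w-1) (by omega) _ nb
    have pz : φ (x + sing i + sing j) = x + sing i + sing j := IH (w-2) (by omega) _ nz
    set z := x + sing i + sing j with hz
    have hzi : z + sing i = x + sing j := by
      funext t
      simp only [Pi.add_apply]
      have : ∀ a b c : ZMod 2, a + b + c + b = a + c := by decide
      exact this _ _ _
    have hzj : z + sing j = x + sing i := by
      funext t
      simp only [Pi.add_apply]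
      have : ∀ a b c : ZMod 2, a + b + c + c = a + b := by decide
      exact this _ _ _
    have adjne1 : (FQ n).Adj (x + sing j) (φ x) := by
      have h2 : (FQ n).Adj (x + sing j) x := adj_add_sing x j
      have h3 := φ.map_rel_iff.mpr h2
      rwa [pb] at h3
    have adjne2 : (FQ n).Adj (x + sing i) (φ x) := by
      have h2 : (FQ n).Adj (x + sing i) x := adj_add_sing x i
      have h3 := φ.map_rel_iff.mpr h2
      rwa [pa] at h3
    rcases common_nbr hn4 hij z (φ x) (by rwa [hzi]) (by rwa [hzj]) with hc | hc
    · exfalso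
      have : x = z := φ.injective (by rw [hc, pz])
      have h4 := congrFun this i
      rw [hz] at h4
      simp only [Pi.add_apply, sing_apply_self,
        sing_apply_ne (fun hcc : i = j => hij hcc)] at h4
      rw [znz _ hi] at h4
      exact (by decide : ¬((1:ZMod 2) = 1 + 1 + 0)) h4
    · rw [hc, hz]
      funext t
      simp only [Pi.add_apply]
      have : ∀ a b c : ZMod 2, a + b + c + b + c = a := by decide
      exact this _ _ _

lemma iv_ne_zero (hn : 1 ≤ n) (k : Fin (n+1)) : iv k ≠ (0 : Vn n) := by
  intro hc
  have h2 : hammingNorm (iv k) = 1 ∨ hammingNorm (iv k) = n := (inE_iff _).mpr ⟨k, rfl⟩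
  rw [hc, hammingNorm_zero] at h2
  omega

lemma adj_zero_iv (hn : 1 ≤ n) (k : Fin (n+1)) : (FQ n).Adj 0 (iv k) := by
  rw [adj_iff]
  exact ⟨fun hc => iv_ne_zero hn k hc.symm, k, by rw [zero_add]⟩

lemma classify (hn : 5 ≤ n) (φ : FQ n ≃g FQ n) :
    ∃ σ : Equiv.Perm (Fin (n+1)), ∀ x, φ x = amap σ x + φ 0 := by
  have hn1 : 1 ≤ n := by omega
  set b := φ 0 with hb
  let ψ : FQ n ≃g FQ n := φ.trans (tIso b)
  have hψ : ∀ x, ψ x = φ x + b := fun x => rfl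
  have hψ0 : ψ 0 = 0 := by rw [hψ, ← hb, addself]
  have hψE : ∀ k, ∃ k', ψ (iv k) = iv k' := by
    intro k
    have h2 := ψ.map_rel_iff.mpr (adj_zero_iv hn1 k)
    rw [hψ0] at h2
    rw [adj_iff] at h2
    obtain ⟨-, k', hk'⟩ := h2
    exact ⟨k', by rwa [zero_add] at hk'⟩
  choose f hf using hψE
  have hfinj : Function.Injective f := by
    intro k1 k2 h
    apply iv_injective (by omega : 2 ≤ n)
    apply ψ.injective
    rw [hf, hf, h]
  let σ : Equiv.Perm (Fin (n+1)) := Equiv.ofBijective f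
    ((Finite.injective_iff_bijective).mp hfinj)
  have hσ : ∀ k, σ k = f k := fun k => rfl
  refine ⟨σ, ?_⟩
  have hρ : ∀ x, amap σ⁻¹ (ψ x) = x := by
    let ρ : FQ n ≃g FQ n := ψ.trans (aIso σ).symm
    have hρa : ∀ x, ρ x = amap σ⁻¹ (ψ x) := fun x => rfl
    intro x
    rw [← hρa]
    apply rigid hn ρ
    · rw [hρa, hψ0, amap_zero]
    · intro k
      rw [hρa, hf, ← hσ, amap_iv]
      congr 1
      simp
  intro x
  have h3 := congrArg (amap σ) (hρ x)
  have h4 : amap σ (amap σ⁻¹ (ψ x)) = ψ x := by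
    have := amap_linv σ⁻¹ (ψ x)
    rwa [inv_inv] at this
  rw [h4] at h3
  rw [← h3, hψ, add_assoc, addself, add_zero]

lemma amap_fix_of_cst {σ : Equiv.Perm (Fin (n+1))} {y : Vn n} (c : ZMod 2)
    (h : pmap σ (lft y) = lft y + cst c) : amap σ y = y := by
  rcases z01 c with h0 | h1
  · rw [amap_fix_iff]
    left
    rw [h, h0]
    funext t
    simp [cst]
  · rw [amap_fix_iff]
    right
    rwa [h1] at h

lemma not_det_of_sigma {S : Set (Vn n)} (hn : 2 ≤ n) (s0 : Vn n)
    (σ : Equiv.Perm (Fin (n+1)))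
    (hfix : ∀ v ∈ S, amap σ (v + s0) = v + s0) (k0 : Fin (n+1)) (hk0 : σ k0 ≠ k0) :
    ¬ IsDeterminingSet (FQ n) S := by
  intro hdet
  let φ : FQ n ≃g FQ n := (tIso s0).trans ((aIso σ).trans (tIso s0))
  have hφ : ∀ x, φ x = amap σ (x + s0) + s0 := fun x => rfl
  have hfixS : ∀ v ∈ S, φ v = v := by
    intro v hv
    rw [hφ, hfix v hv, add_assoc, addself, add_zero]
  have hmv := hdet φ hfixS (iv k0 + s0)
  rw [hφ] at hmv
  have h2 : iv k0 + s0 + s0 = iv k0 := by rw [add_assoc, addself, add_zero]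
  rw [h2, amap_iv] at hmv
  exact hk0 (iv_injective hn (add_right_cancel hmv))

lemma lower_bound {m : ℕ} (hm : 3 ≤ m) (hcase : n = 2^m - 1 ∨ n = 2^m - 3)
    {S : Set (Vn n)} (hdet : IsDeterminingSet (FQ n) S) : m + 2 ≤ S.ncard := by
  have hmn : 2^(m-1) < n + 1 ∧ n + 1 ≤ 2^m ∧ 5 ≤ n := by
    have h8 : 8 ≤ 2^m := by
      calc (8:ℕ) = 2^3 := rfl
      _ ≤ 2^m := Nat.pow_le_pow_right (by norm_num) hm
    have hhalf : 2 * 2^(m-1) = 2^m := by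
      rw [← pow_succ']
      congr 1
      omega
    rcases hcase with rfl | rfl <;> omega
  obtain ⟨hlt, hle, hn5⟩ := hmn
  have hn2 : 2 ≤ n := by omega
  by_contra hcard
  push_neg at hcard
  -- S is nonempty or empty
  rcases Set.eq_empty_or_nonempty S with rfl | ⟨s0, hs0⟩
  · -- empty set: translation moves things
    refine not_det_of_sigma hn2 0 (Equiv.swap 0 (Fin.last n))
      (fun v hv => absurd hv (Set.notMem_empty v)) 0 ?_ hdet
    rw [Equiv.swap_apply_left]
    intro hc
    have hval := congrArg Fin.val hc
    rw [Fin.val_last, Fin.val_zero] at hval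
    omega
  · -- nonempty case
    have hfin : S.Finite := Set.toFinite S
    set F : Finset (Vn n) := hfin.toFinset with hF
    have hFcard : F.card ≤ m + 1 := by
      have : F.card = S.ncard := (Set.ncard_eq_toFinset_card S hfin).symm
      omega
    set F' : Finset (Vn n) := F.image (· + s0) with hF'
    have hF'card : F'.card ≤ m + 1 :=
      le_trans (Finset.card_image_le) hFcard
    have h0F' : (0 : Vn n) ∈ F' := by
      rw [hF', Finset.mem_image]
      exact ⟨s0, by rw [hF]; simpa using hs0, addself s0⟩
    set T : Finset (Vn n) := F'.erase 0 with hT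
    have hTcard : T.card ≤ m := by
      rw [hT, Finset.card_erase_of_mem h0F']
      omega
    -- the β map
    set β : Fin (n+1) → (↥T → ZMod 2) := fun j y => lft (y : Vn n) j with hβ
    -- one general step: given good σ, contradiction
    have main : ∀ σ : Equiv.Perm (Fin (n+1)), (∀ y ∈ T, ∃ c, pmap σ (lft y) = lft y + cst c) →
        ∀ k0, σ k0 ≠ k0 → False := by
      intro σ hσfix k0 hk0
      refine not_det_of_sigma hn2 s0 σ ?_ k0 hk0 hdet
      intro v hv
      have hvF' : v + s0 ∈ F' := by
        rw [hF', Finset.mem_image]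
        exact ⟨v, by rw [hF]; simpa using hv, rfl⟩
      rcases Classical.em (v + s0 = 0) with h0 | hne
      · rw [h0, amap_zero]
      · have hvT : v + s0 ∈ T := by rw [hT]; exact Finset.mem_erase.mpr ⟨hne, hvF'⟩
        obtain ⟨c, hc⟩ := hσfix _ hvT
        exact amap_fix_of_cst c hc
    by_cases hβinj : Function.Injective β
    · -- injective case
      have hcard1 : n + 1 ≤ 2 ^ T.card := by
        have := Fintype.card_le_of_injective β hβinj
        simpa [Fintype.card_fun, Fintype.card_coe] using this
      have hTm : T.card = m := by
        by_contra hne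
        have h1 : T.card ≤ m - 1 := by omega
        have : (2:ℕ) ^ T.card ≤ 2 ^ (m-1) := Nat.pow_le_pow_right (by norm_num) h1
        omega
      have hTne : T.Nonempty := Finset.card_pos.mp (by omega)
      set R : Finset (↥T → ZMod 2) := Finset.image β Finset.univ with hR
      have hRcard : R.card = n + 1 := by
        rw [hR, Finset.card_image_of_injective _ hβinj, Finset.card_univ, Fintype.card_fin]
      have hfull : Fintype.card (↥T → ZMod 2) = 2 ^ m := by
        simp [Fintype.card_fun, Fintype.card_coe, hTm]
      -- find ε ≠ 0 with R closed under +ε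
      have hε : ∃ ε : ↥T → ZMod 2, ε ≠ 0 ∧ ∀ p ∈ R, p + ε ∈ R := by
        rcases hcase with h1 | h1
        · -- n = 2^m - 1 : R = univ
          have : R = Finset.univ := Finset.eq_univ_of_card R (by rw [hRcard, hfull]; omega)
          refine ⟨fun _ => 1, ?_, fun p _ => this ▸ Finset.mem_univ _⟩
          intro hc
          obtain ⟨y, hy⟩ := hTne
          exact one_ne_zero (congrFun hc ⟨y, hy⟩)
        · -- n = 2^m - 3 : complement has exactly two elements
          have hRc : Rᶜ.card = 2 := by
            rw [Finset.card_compl, hRcard, hfull]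
            omega
          obtain ⟨p, q, hpq, hRceq⟩ := Finset.card_eq_two.mp hRc
          refine ⟨p + q, ?_, ?_⟩
          · intro hc
            apply hpq
            funext y
            have := congrFun hc y
            simp only [Pi.add_apply, Pi.zero_apply] at this
            have h2 : ∀ a b : ZMod 2, a + b = 0 → a = b := by decide
            exact h2 _ _ this
          · intro r hr
            by_contra hout
            have hrc : r + (p + q) ∈ Rᶜ := Finset.mem_compl.mpr hout
            rw [hRceq] at hrc
            have hsolve : ∀ a b : Vn 0, True := fun _ _ => trivial
            rcases Finset.mem_insert.mp hrc with he | he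
            · -- r + (p+q) = p  →  r = q
              have : r = q := by
                funext y
                have := congrFun he y
                simp only [Pi.add_apply] at this
                have h2 : ∀ a b c : ZMod 2, a + (b + c) = b → a = c := by decide
                exact h2 _ _ _ this
              rw [this] at hr
              have : q ∈ Rᶜ := by rw [hRceq]; simp
              exact (Finset.mem_compl.mp this) hr
            · -- r + (p+q) = q  →  r = p
              have he2 : r + (p + q) = q := Finset.mem_singleton.mp he
              have : r = p := by
                funext y
                have := congrFun he2 y
                simp only [Pi.add_apply] at this
                have h2 : ∀ a b c : ZMod 2, a + (b + c) = c → a = b := by decide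
                exact h2 _ _ _ this
              rw [this] at hr
              have : p ∈ Rᶜ := by rw [hRceq]; simp
              exact (Finset.mem_compl.mp this) hr
      obtain ⟨ε, hεne, hεcl⟩ := hε
      -- build σ
      have hg : ∀ j : Fin (n+1), ∃ j', β j' = β j + ε := by
        intro j
        have : β j ∈ R := by rw [hR]; exact Finset.mem_image_of_mem β (Finset.mem_univ j)
        have := hεcl _ this
        rw [hR, Finset.mem_image] at this
        obtain ⟨j', -, hj'⟩ := this
        exact ⟨j', hj'⟩
      choose g hgspec using hg
      have hginj : Function.Injective g := by
        intro j1 j2 h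
        apply hβinj
        have h1 := hgspec j1
        have h2 := hgspec j2
        rw [h] at h1
        rw [h2] at h1
        exact add_right_cancel h1.symm
      let σ : Equiv.Perm (Fin (n+1)) := Equiv.ofBijective g
        ((Finite.injective_iff_bijective).mp hginj)
      have hσg : ∀ j, σ j = g j := fun j => rfl
      refine main σ ?_ 0 ?_
      · intro y hy
        refine ⟨ε ⟨y, hy⟩, ?_⟩
        funext t
        simp only [pmap, Pi.add_apply, cst]
        have hkey : β (σ.symm t) = β t + ε := by
          have := hgspec (σ.symm t)
          rw [← hσg, Equiv.apply_symm_apply] at this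
          funext y'
          have h2 := congrFun this y'
          simp only [Pi.add_apply] at h2 ⊢
          have h3 : ∀ a b c : ZMod 2, a = b + c → b = a + c := by decide
          exact h3 _ _ _ h2
        have := congrFun hkey ⟨y, hy⟩
        simpa [hβ] using this
      · rw [hσg]
        intro hc
        apply hεne
        have := hgspec 0
        rw [hc] at this
        funext y
        have h2 := congrFun this y
        simp only [Pi.add_apply, Pi.zero_apply] at h2 ⊢
        have h3 : ∀ a b : ZMod 2, a = a + b → b = 0 := by decide
        exact h3 _ _ h2
    · -- non-injective case: swap
      rw [Function.not_injective_iff] at hβinj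
      obtain ⟨j1, j2, hβeq, hjne⟩ := hβinj
      refine main (Equiv.swap j1 j2) ?_ j1 ?_
      · intro y hy
        refine ⟨0, ?_⟩
        have hyy : lft (y:Vn n) j1 = lft (y:Vn n) j2 := by
          have := congrFun hβeq ⟨y, hy⟩
          simpa [hβ] using this
        funext t
        simp only [pmap, Pi.add_apply, cst, add_zero, Equiv.symm_swap]
        rw [Equiv.swap_apply_def]
        by_cases h1 : t = j1
        · rw [if_pos h1, h1, hyy]
        · by_cases h2 : t = j2
          · rw [if_neg h1, if_pos h2, h2, ← hyy]
          · rw [if_neg h1, if_neg h2]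
      · rw [Equiv.swap_apply_left]
        exact fun hc => hjne hc.symm

/-- bit value as element of ZMod 2 -/
def tb (i t : ℕ) : ZMod 2 := if Nat.testBit t i then 1 else 0

def bitv (n : ℕ) (i : ℕ) : Vn n := fun j => tb i j.val + tb i n

lemma tb_zero (i : ℕ) : tb i 0 = 0 := by simp [tb]

lemma tb_two_pow_self (i : ℕ) : tb i (2^i) = 1 := by
  simp [tb, Nat.testBit_two_pow_self]

lemma tb_two_pow_ne {i i' : ℕ} (h : i ≠ i') : tb i' (2^i) = 0 := by
  simp [tb, Nat.testBit_two_pow, fun hc : i = i' => h hc]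

lemma tb_inj {i t s : ℕ} (h : tb i t = tb i s) : Nat.testBit t i = Nat.testBit s i := by
  cases ht : Nat.testBit t i <;> cases hs : Nat.testBit s i <;>
      simp only [tb, ht, hs] at h <;> simp at h ⊢

lemma lft_bitv (i : ℕ) : lft (bitv n i) = fun j : Fin (n+1) => tb i j.val + tb i n := by
  funext j
  cases j using Fin.lastCases with
  | last => simp [Fin.val_last, z2]
  | cast t => simp [bitv, Fin.coe_castSucc]

lemma bitv_ne_bitv {i i' : ℕ} (hi : 2^i < n) (h2i' : i ≠ i') (hc : bitv n i = bitv n i') :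
    False := by
  have hn0 : 0 < n := lt_of_le_of_lt (Nat.zero_le _) hi
  have h0 : tb i 0 + tb i n = tb i' 0 + tb i' n := congrFun hc ⟨0, hn0⟩
  rw [tb_zero, tb_zero, zero_add, zero_add] at h0
  have hp : tb i (2^i) + tb i n = tb i' (2^i) + tb i' n := congrFun hc ⟨2^i, hi⟩
  rw [tb_two_pow_self, tb_two_pow_ne h2i', zero_add, ← h0] at hp
  have : ∀ a : ZMod 2, ¬(1 + a = a) := by decide
  exact this _ hp

lemma bitv_ne_zero {i : ℕ} (hi : 2^i < n) (hc : bitv n i = 0) : False := by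
  have hn0 : 0 < n := lt_of_le_of_lt (Nat.zero_le _) hi
  have h0 : tb i 0 + tb i n = 0 := congrFun hc ⟨0, hn0⟩
  rw [tb_zero, zero_add] at h0
  have hp : tb i (2^i) + tb i n = 0 := congrFun hc ⟨2^i, hi⟩
  rw [tb_two_pow_self, h0, add_zero] at hp
  exact one_ne_zero hp

lemma bitv_ne_sing0 (hn : 5 ≤ n) {i : ℕ}
    (hc : bitv n i = sing ⟨0, by omega⟩) : False := by
  have h0 : tb i 0 + tb i n = sing (⟨0, by omega⟩ : Fin n) ⟨0, by omega⟩ :=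
    congrFun hc ⟨0, by omega⟩
  rw [sing_apply_self, tb_zero, zero_add] at h0
  -- h0 : tb i n = 1
  have h1 : tb i 1 + tb i n = sing (⟨0, by omega⟩ : Fin n) ⟨1, by omega⟩ :=
    congrFun hc ⟨1, by omega⟩
  rw [sing_apply_ne (by simp [Fin.ext_iff] : (⟨1, by omega⟩ : Fin n) ≠ ⟨0, by omega⟩), h0] at h1
  have htb1 : tb i 1 = 1 := by
    have : ∀ a : ZMod 2, a + 1 = 0 → a = 1 := by decide
    exact this _ h1
  have hi0 : i = 0 := by
    by_contra hne
    rw [show tb i 1 = 0 from by simp [tb, Nat.testBit_one_eq_true_iff_self_eq_zero, hne]] at htb1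
    exact one_ne_zero htb1.symm
  subst hi0
  have h2 : tb 0 2 + tb 0 n = sing (⟨0, by omega⟩ : Fin n) ⟨2, by omega⟩ :=
    congrFun hc ⟨2, by omega⟩
  rw [sing_apply_ne (by simp [Fin.ext_iff] : (⟨2, by omega⟩ : Fin n) ≠ ⟨0, by omega⟩), h0,
    show tb 0 2 = 0 from by simp [tb], zero_add] at h2
  exact one_ne_zero h2

lemma upper_bound {m : ℕ} (hm : 3 ≤ m) (hn5 : 5 ≤ n) (hle : n + 1 ≤ 2^m)
    (h2i : ∀ i < m, 2^i < n) :
    ∃ S : Set (Vn n), S.ncard = m + 2 ∧ IsDeterminingSet (FQ n) S := by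
  have hn2 : 2 ≤ n := by omega
  set Fs : Finset (Vn n) :=
    insert 0 (insert (sing ⟨0, by omega⟩) ((Finset.range m).image (bitv n))) with hFs
  have hsingiv : sing (⟨0, by omega⟩ : Fin n) = iv 0 := by
    rw [show (0 : Fin (n+1)) = Fin.castSucc ⟨0, by omega⟩ from rfl, iv_cast']
  refine ⟨↑Fs, ?_, ?_⟩
  · -- cardinality
    rw [Set.ncard_coe_finset, hFs]
    have hbinj : Set.InjOn (bitv n) ↑(Finset.range m) := by
      intro i hi i' hi' hcc
      by_contra hne
      exact bitv_ne_bitv (h2i i (by simpa using hi)) hne hcc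
    rw [Finset.card_insert_of_notMem, Finset.card_insert_of_notMem,
      Finset.card_image_of_injOn hbinj, Finset.card_range]
    · rw [Finset.mem_image]
      rintro ⟨i, hi, hceq⟩
      exact bitv_ne_sing0 hn5 hceq
    · rw [Finset.mem_insert]
      rintro (hc | hc)
      · have := congrFun hc ⟨0, by omega⟩
        rw [sing_apply_self] at this
        exact one_ne_zero this.symm
      · rw [Finset.mem_image] at hc
        obtain ⟨i, hi, hceq⟩ := hc
        exact bitv_ne_zero (h2i i (by simpa using hi)) hceq
  · -- determining
    intro φ hfix v
    obtain ⟨σ, hφ⟩ := classify hn5 φ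
    have h0mem : (0 : Vn n) ∈ (↑Fs : Set (Vn n)) := by simp [hFs]
    have h00 : φ 0 = 0 := hfix 0 h0mem
    have hφ' : ∀ x, φ x = amap σ x := by
      intro x
      rw [hφ, h00, add_zero]
    have hσ0 : σ 0 = 0 := by
      have hmem : sing (⟨0, by omega⟩ : Fin n) ∈ (↑Fs : Set (Vn n)) := by simp [hFs]
      have := hfix _ hmem
      rw [hφ', hsingiv, amap_iv] at this
      exact iv_injective hn2 this
    have hσsymm0 : σ.symm 0 = 0 := by
      rw [Equiv.symm_apply_eq, hσ0]
    -- bit constraints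
    have hbits : ∀ i < m, ∀ j : Fin (n+1), tb i (σ.symm j).val = tb i j.val := by
      intro i hi j
      have hmem : bitv n i ∈ (↑Fs : Set (Vn n)) := by
        simp only [hFs, Finset.coe_insert, Set.mem_insert_iff, Finset.mem_coe,
          Finset.mem_image, Finset.mem_range]
        right; right
        exact ⟨i, hi, rfl⟩
      have hfx := hfix _ hmem
      rw [hφ'] at hfx
      rw [amap_fix_iff] at hfx
      have key : ∃ c : ZMod 2, ∀ t : Fin (n+1), lft (bitv n i) (σ.symm t) = lft (bitv n i) t + c := by
        rcases hfx with h | h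
        · exact ⟨0, fun t => by rw [add_zero]; exact congrFun h t⟩
        · refine ⟨1, fun t => ?_⟩
          have := congrFun h t
          simpa [cst, pmap] using this
      obtain ⟨c, hc⟩ := key
      have hc0 : c = 0 := by
        have := hc 0
        rw [hσsymm0] at this
        have h3 : ∀ a c : ZMod 2, a = a + c → c = 0 := by decide
        exact h3 _ _ this
      have := hc j
      rw [hc0, add_zero, lft_bitv] at this
      simp only at this
      exact add_right_cancel this
    -- conclude σ.symm = id
    have hid : ∀ j : Fin (n+1), σ.symm j = j := by
      intro j
      apply Fin.ext
      apply Nat.eq_of_testBit_eq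
      intro i
      by_cases hi : i < m
      · exact tb_inj (hbits i hi j)
      · have hb1 : (σ.symm j).val < 2^i := by
          calc (σ.symm j).val < n + 1 := (σ.symm j).isLt
          _ ≤ 2^m := hle
          _ ≤ 2^i := Nat.pow_le_pow_right (by norm_num) (by omega)
        have hb2 : j.val < 2^i := by
          calc j.val < n + 1 := j.isLt
          _ ≤ 2^m := hle
          _ ≤ 2^i := Nat.pow_le_pow_right (by norm_num) (by omega)
        rw [Nat.testBit_eq_false_of_lt hb1, Nat.testBit_eq_false_of_lt hb2]
    have hσ1 : σ = 1 := by
      ext j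
      have h5 := hid (σ j)
      rw [Equiv.symm_apply_apply] at h5
      simp only [Equiv.Perm.one_apply]
      exact congrArg Fin.val h5.symm
    rw [hφ', hσ1, amap_one]

end FQaux

/-- For `n ∈ {2^m - 1, 2^m - 3}` with `m ≥ 3`, `det(FQ_n) = ⌈lg n⌉ + 2`. -/
theorem stmt12 (n m : ℕ) (hm : 3 ≤ m) (h : n = 2 ^ m - 1 ∨ n = 2 ^ m - 3) :
    detNum (FQ n) = Nat.clog 2 n + 2 := by
  have h8 : 8 ≤ 2^m := by
    calc (8:ℕ) = 2^3 := rfl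
    _ ≤ 2^m := Nat.pow_le_pow_right (by norm_num) hm
  have hhalf : 2 * 2^(m-1) = 2^m := by
    rw [← pow_succ']
    congr 1
    omega
  have hn5 : 5 ≤ n := by rcases h with rfl | rfl <;> omega
  have hle : n + 1 ≤ 2^m := by rcases h with rfl | rfl <;> omega
  have hltn : 2^(m-1) < n := by
    have h4 : 4 ≤ 2^(m-1) := by
      calc (4:ℕ) = 2^2 := rfl
      _ ≤ 2^(m-1) := Nat.pow_le_pow_right (by norm_num) (by omega)
    rcases h with rfl | rfl <;> omega
  have h2i : ∀ i < m, 2^i < n := by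
    intro i hi
    calc 2^i ≤ 2^(m-1) := Nat.pow_le_pow_right (by norm_num) (by omega)
    _ < n := hltn
  have hclog : Nat.clog 2 n = m := by
    have hub : Nat.clog 2 n ≤ m := (Nat.clog_le_iff_le_pow one_lt_two).mpr (by omega)
    have hlb : m ≤ Nat.clog 2 n := by
      by_contra hcc
      push_neg at hcc
      have := (Nat.clog_le_iff_le_pow one_lt_two).mp
        (show Nat.clog 2 n ≤ m - 1 by omega)
      omega
    omega
  rw [hclog]
  obtain ⟨S, hScard, hSdet⟩ := FQaux.upper_bound hm hn5 hle h2i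
  have hmem : m + 2 ∈ {r | ∃ S : Set (Fin n → ZMod 2), S.ncard = r ∧ IsDeterminingSet (FQ n) S} :=
    ⟨S, hScard, hSdet⟩
  apply le_antisymm
  · exact Nat.sInf_le hmem
  · apply le_csInf ⟨m + 2, hmem⟩
    rintro r ⟨S', hc', hd'⟩
    rw [← hc']
    exact FQaux.lower_bound hm h hd'
end
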